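/- Properties of the approximations of the eigenfunction (Proposition 'Properties of the approximations of the eigenfunction'): Fix an integer Δ ≥ 3 and let δ ∈ (0,1). Then (a) for every ε ∈ (0,1] and every r ∈ R_Δ one has w^−_{p,δ}(0) = 0 and w^+_{p,δ}(0) = 0; and (b) there exists ε₀ > 0 such that for every ε ∈ (0,ε₀) and every r ∈ R_Δ, the functions w^−_{p,δ} and w^+_{p,δ} are monotone increasing on [0,∞). -/

import Mathlib

open Real MeasureTheory Filter

noncomputable section

/-- Tail sums: `s_k = Σ_{d=k}^Δ r_d` (also used as `q_k` for distributions `p`). -/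
def tailS (Δ : ℕ) (r : ℕ → ℝ) (k : ℕ) : ℝ := ∑ d ∈ Finset.Icc k Δ, r d

/-- Membership in the set `R_Δ`: `r_2 = -1`, `r_k ≥ 0` for `3 ≤ k ≤ Δ`, `r_k = 0` for `k > Δ`,
and `Σ_{k=3}^Δ r_k = 1`. -/
def memR (Δ : ℕ) (r : ℕ → ℝ) : Prop :=
  r 2 = -1 ∧ (∀ k, 3 ≤ k → k ≤ Δ → 0 ≤ r k) ∧ (∀ k, Δ < k → r k = 0) ∧
    (∑ k ∈ Finset.Icc 3 Δ, r k) = 1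

/-- The Molloy–Reed constant `Υ_r = Σ_{k=3}^Δ k(k-2) r_k`. -/
def Upsilon (Δ : ℕ) (r : ℕ → ℝ) : ℝ := ∑ k ∈ Finset.Icc 3 Δ, (k : ℝ) * ((k : ℝ) - 2) * r k

/-- `Λ_r(t) = λ'(t) · ∫_0^{λ(t)} e^x/(1+x)² · (Σ_{k=2}^{Δ-1} x^k/k! · s_{k+1}) dx`. -/
def LamErr (lam : ℝ → ℝ) (Δ : ℕ) (r : ℕ → ℝ) (t : ℝ) : ℝ :=
  deriv lam t * ∫ x in (0:ℝ)..(lam t),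
    Real.exp x / (1 + x) ^ 2 *
      ∑ k ∈ Finset.Icc 2 (Δ - 1), x ^ k / (Nat.factorial k : ℝ) * tailS Δ r (k + 1)

/-- `H_r(t) = e^{-λ(t)} (Λ_r'(t) - λ'(t)Λ_r(t) + λ'(t) Σ_{k=0}^{Δ-2} λ(t)^k/k! · r_{k+2})`. -/
def Herr (lam : ℝ → ℝ) (Δ : ℕ) (r : ℕ → ℝ) (t : ℝ) : ℝ :=
  Real.exp (-lam t) *
    (deriv (LamErr lam Δ r) t - deriv lam t * LamErr lam Δ r t +
      deriv lam t * ∑ k ∈ Finset.range (Δ - 1), lam t ^ k / (Nat.factorial k : ℝ) * r (k + 2))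

/-- `I_r(t) = e^{-λ(t)} ( -Λ_r(t) + Σ_{k=1}^{Δ-2} λ(t)^k/k! · s_{k+2})`. -/
def Ierr (lam : ℝ → ℝ) (Δ : ℕ) (r : ℕ → ℝ) (t : ℝ) : ℝ :=
  Real.exp (-lam t) *
    (-LamErr lam Δ r t +
      ∑ k ∈ Finset.Icc 1 (Δ - 2), lam t ^ k / (Nat.factorial k : ℝ) * tailS Δ r (k + 2))

/-- `u(t) = 1 + λ(t) ∫_0^t (λ'(s)-1)/λ(s)² ds`. -/
def uAux (lam : ℝ → ℝ) (t : ℝ) : ℝ :=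
  1 + lam t * ∫ s in (0:ℝ)..t, (deriv lam s - 1) / (lam s) ^ 2

/-- `α_r(t) = -∫_0^t u(s) H_r(s) λ(s) ds`. -/
def alphaAux (lam : ℝ → ℝ) (Δ : ℕ) (r : ℕ → ℝ) (t : ℝ) : ℝ :=
  -∫ s in (0:ℝ)..t, uAux lam s * Herr lam Δ r s * lam s

/-- `β_r(t) = ∫_0^t H_r(s) λ(s)² ds`. -/
def betaAux (lam : ℝ → ℝ) (Δ : ℕ) (r : ℕ → ℝ) (t : ℝ) : ℝ :=
  ∫ s in (0:ℝ)..t, Herr lam Δ r s * (lam s) ^ 2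

/-- `ω_r(t) = α_r(t) λ(t) + β_r(t) u(t)`. -/
def omegaAux (lam : ℝ → ℝ) (Δ : ℕ) (r : ℕ → ℝ) (t : ℝ) : ℝ :=
  alphaAux lam Δ r t * lam t + betaAux lam Δ r t * uAux lam t

/-- `t^-_{p,δ} = (1-δ)/(ε Υ_r)`. -/
def tMinus (Δ : ℕ) (r : ℕ → ℝ) (ε δ : ℝ) : ℝ := (1 - δ) / (ε * Upsilon Δ r)

/-- `t^+_{p,δ} = (1+δ)/(ε Υ_r)`. -/
def tPlus (Δ : ℕ) (r : ℕ → ℝ) (ε δ : ℝ) : ℝ := (1 + δ) / (ε * Upsilon Δ r)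

/-- `w^-_{p,δ}`. -/
def wMinus (lam : ℝ → ℝ) (Δ : ℕ) (r : ℕ → ℝ) (ε δ : ℝ) (t : ℝ) : ℝ :=
  if t ≤ tMinus Δ r ε δ then lam t + (1 + δ / 2) * ε * omegaAux lam Δ r t
  else lam (tMinus Δ r ε δ) + (1 + δ / 2) * ε * omegaAux lam Δ r (tMinus Δ r ε δ)

/-- `w^+_{p,δ}`. -/
def wPlus (lam : ℝ → ℝ) (Δ : ℕ) (r : ℕ → ℝ) (ε δ : ℝ) (t : ℝ) : ℝ :=
  if t ≤ tPlus Δ r ε δ then lam t + (1 - δ / 2) * ε * omegaAux lam Δ r t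
  else lam (tPlus Δ r ε δ) + (1 - δ / 2) * ε * omegaAux lam Δ r (tPlus Δ r ε δ)

/-- `Ī^-_{p,δ}(t) = e^{-λ(t)} + (1-δ) ε I_r(t)`. -/
def IbarMinus (lam : ℝ → ℝ) (Δ : ℕ) (r : ℕ → ℝ) (ε δ : ℝ) (t : ℝ) : ℝ :=
  Real.exp (-lam t) + (1 - δ) * ε * Ierr lam Δ r t

/-- `Ī^+_{p,δ}(t) = e^{-λ(t)} + (1+δ) ε I_r(t)`. -/
def IbarPlus (lam : ℝ → ℝ) (Δ : ℕ) (r : ℕ → ℝ) (ε δ : ℝ) (t : ℝ) : ℝ :=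
  Real.exp (-lam t) + (1 + δ) * ε * Ierr lam Δ r t

/-- `Ĩ_p(x) = e^{-x} (1 + ε Σ_{k=1}^{Δ-2} x^k/k! · s_{k+2})`. -/
def Itilde (Δ : ℕ) (r : ℕ → ℝ) (ε : ℝ) (x : ℝ) : ℝ :=
  Real.exp (-x) *
    (1 + ε * ∑ k ∈ Finset.Icc 1 (Δ - 2), x ^ k / (Nat.factorial k : ℝ) * tailS Δ r (k + 2))

section ProofAux
open Real MeasureTheory Filter intervalIntegral Set

def NiceLam (lam : ℝ → ℝ) : Prop :=
  Differentiable ℝ lam ∧ lam 0 = 0 ∧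
    ∀ t : ℝ, 0 ≤ t → deriv lam t = Real.exp (-lam t) * (1 + lam t)

lemma mono_from_deriv {F F' : ℝ → ℝ} (hF : ∀ t, 0 ≤ t → HasDerivAt F (F' t) t)
    (h' : ∀ t, 0 < t → 0 ≤ F' t) : MonotoneOn F (Set.Ici 0) := by
  apply monotoneOn_of_hasDerivWithinAt_nonneg (convex_Ici 0)
    (fun t ht => (hF t ht).continuousAt.continuousWithinAt)
  · intro x hx
    rw [interior_Ici] at hx
    exact (hF x (le_of_lt hx)).hasDerivWithinAt
  · intro x hx
    rw [interior_Ici] at hx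
    exact h' x hx

lemma mono_from_deriv_Icc {F F' : ℝ → ℝ} {a b : ℝ}
    (hcont : ContinuousOn F (Set.Icc a b))
    (hF : ∀ t, t ∈ Set.Ioo a b → HasDerivAt F (F' t) t)
    (h' : ∀ t, t ∈ Set.Ioo a b → 0 ≤ F' t) : MonotoneOn F (Set.Icc a b) := by
  apply monotoneOn_of_hasDerivWithinAt_nonneg (convex_Icc a b) hcont
  · intro x hx
    rw [interior_Icc] at hx
    exact (hF x hx).hasDerivWithinAt
  · intro x hx
    rw [interior_Icc] at hx
    exact h' x hx

lemma lam_nonneg {lam : ℝ → ℝ} (hl : NiceLam lam) : ∀ t, 0 ≤ t → 0 ≤ lam t := by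
  obtain ⟨hdiff, h0, hode⟩ := hl
  intro b hb
  by_contra hneg
  push_neg at hneg
  have hb0 : (0:ℝ) < b := by
    rcases eq_or_lt_of_le hb with h | h
    · exfalso; rw [← h, h0] at hneg; exact lt_irrefl _ hneg
    · exact h
  set m : ℝ := max (lam b / 2) (-(1/2)) with hm
  have hmneg : m < 0 := max_lt (by linarith) (by norm_num)
  have hmge : -(1/2) ≤ m := le_max_right _ _
  have hbS : lam b ≤ m := le_trans (by linarith) (le_max_left _ _)
  set S : Set ℝ := Set.Icc 0 b ∩ lam ⁻¹' (Set.Iic m) with hS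
  have hSne : S.Nonempty := ⟨b, ⟨⟨hb, le_refl b⟩, hbS⟩⟩
  have hSclosed : IsClosed S :=
    IsClosed.inter isClosed_Icc (IsClosed.preimage hdiff.continuous isClosed_Iic)
  have hSbdd : BddBelow S := ⟨0, fun x hx => hx.1.1⟩
  set c := sInf S with hc
  have hcS : c ∈ S := hSclosed.csInf_mem hSne hSbdd
  have hc0 : 0 ≤ c := hcS.1.1
  have hclam : lam c ≤ m := hcS.2
  have hcpos : 0 < c := by
    rcases eq_or_lt_of_le hc0 with h | h
    · exfalso; rw [← h, h0] at hclam; linarith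
    · exact h
  -- on [0, c), lam > m
  have hgt : ∀ t, 0 ≤ t → t < c → m < lam t := by
    intro t ht htc
    by_contra hle
    push_neg at hle
    have : t ∈ S := ⟨⟨ht, le_trans htc.le hcS.1.2⟩, hle⟩
    exact absurd (csInf_le hSbdd this) (not_le.mpr htc)
  -- strict mono on [0,c]
  have hsm : StrictMonoOn lam (Set.Icc 0 c) := by
    apply strictMonoOn_of_hasDerivWithinAt_pos (convex_Icc 0 c)
      hdiff.continuous.continuousOn (f' := deriv lam)
    · intro x hx
      exact (hdiff x).hasDerivAt.hasDerivWithinAt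
    · intro x hx
      rw [interior_Icc] at hx
      have hx0 : (0:ℝ) ≤ x := hx.1.le
      rw [hode x hx0]
      have h1 : m < lam x := hgt x hx0 hx.2
      have h2 : -1 < lam x := by linarith
      exact mul_pos (Real.exp_pos _) (by linarith)
  have : lam 0 < lam c := hsm ⟨le_refl 0, hc0⟩ ⟨hc0, le_refl c⟩ hcpos
  rw [h0] at this
  linarith

lemma lam_deriv_eq {lam : ℝ → ℝ} (hl : NiceLam lam) {t : ℝ} (ht : 0 ≤ t) :
    deriv lam t = Real.exp (-lam t) * (1 + lam t) := hl.2.2 t ht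

lemma lam_deriv_pos {lam : ℝ → ℝ} (hl : NiceLam lam) {t : ℝ} (ht : 0 ≤ t) :
    0 < deriv lam t := by
  rw [lam_deriv_eq hl ht]
  have := lam_nonneg hl t ht
  positivity

lemma lam_deriv_le_one {lam : ℝ → ℝ} (hl : NiceLam lam) {t : ℝ} (ht : 0 ≤ t) :
    deriv lam t ≤ 1 := by
  rw [lam_deriv_eq hl ht]
  have h := lam_nonneg hl t ht
  have h2 : 1 + lam t ≤ Real.exp (lam t) := by
    have := Real.add_one_le_exp (lam t); linarith
  rw [Real.exp_neg]
  rw [inv_mul_le_iff₀ (Real.exp_pos _)]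
  linarith

lemma lam_mono {lam : ℝ → ℝ} (hl : NiceLam lam) : MonotoneOn lam (Set.Ici 0) := by
  apply mono_from_deriv (F' := deriv lam) (fun t ht => (hl.1 t).hasDerivAt)
  intro t ht
  exact (lam_deriv_pos hl ht.le).le

lemma lam_le_self {lam : ℝ → ℝ} (hl : NiceLam lam) : ∀ t, 0 ≤ t → lam t ≤ t := by
  intro t ht
  have := mono_from_deriv (F := fun t => t - lam t) (F' := fun t => 1 - deriv lam t)
    (fun s hs => (hasDerivAt_id s).sub (hl.1 s).hasDerivAt)
    (fun s hs => by
      have := lam_deriv_le_one hl hs.le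
      show 0 ≤ 1 - deriv lam s
      linarith)
  have h2 := this (Set.mem_Ici.mpr (le_refl 0)) (Set.mem_Ici.mpr ht) ht
  simp [hl.2.1] at h2
  linarith

lemma exp_lam_ge {lam : ℝ → ℝ} (hl : NiceLam lam) : ∀ t, 0 ≤ t → 1 + t ≤ Real.exp (lam t) := by
  intro t ht
  have := mono_from_deriv (F := fun t => Real.exp (lam t) - 1 - t)
    (F' := fun t => Real.exp (lam t) * deriv lam t - 1)
    (fun s hs => (((hl.1 s).hasDerivAt).exp.sub_const 1).sub (hasDerivAt_id s))
    ?_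
  · have h2 := this (Set.mem_Ici.mpr (le_refl 0)) (Set.mem_Ici.mpr ht) ht
    simp [hl.2.1] at h2
    linarith
  · intro s hs
    show 0 ≤ Real.exp (lam s) * deriv lam s - 1
    rw [lam_deriv_eq hl hs.le]
    have h := lam_nonneg hl s hs.le
    have heq : Real.exp (lam s) * (Real.exp (-lam s) * (1 + lam s)) = 1 + lam s := by
      rw [← mul_assoc, ← Real.exp_add]; simp
    rw [heq]; linarith

lemma exp_lam_le {lam : ℝ → ℝ} (hl : NiceLam lam) :
    ∀ t, 0 ≤ t → Real.exp (lam t) ≤ (1 + t)^2 := by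
  intro t ht
  have := mono_from_deriv (F := fun t => (1+t)^2 - Real.exp (lam t))
    (F' := fun t => 2*(1+t) - Real.exp (lam t) * deriv lam t)
    ?_ ?_
  · have h2 := this (Set.mem_Ici.mpr (le_refl 0)) (Set.mem_Ici.mpr ht) ht
    simp [hl.2.1] at h2
    linarith
  · intro s hs
    have h1 : HasDerivAt (fun t => (1+t)^2) (2*(1+s)) s := by
      have := ((hasDerivAt_id s).const_add 1).fun_pow 2
      simpa using this
    exact h1.sub ((hl.1 s).hasDerivAt).exp
  · intro s hs
    show 0 ≤ 2 * (1 + s) - Real.exp (lam s) * deriv lam s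
    rw [lam_deriv_eq hl hs.le]
    have h : Real.exp (lam s) * (Real.exp (-lam s) * (1 + lam s)) = 1 + lam s := by
      rw [← mul_assoc, ← Real.exp_add]; simp
    rw [h]
    have := lam_le_self hl s hs.le
    nlinarith

lemma exp_neg_lam_le {lam : ℝ → ℝ} (hl : NiceLam lam) {t : ℝ} (ht : 0 ≤ t) :
    Real.exp (-lam t) ≤ (1+t)⁻¹ := by
  rw [Real.exp_neg]
  have h := exp_lam_ge hl t ht
  have h1 : (0:ℝ) < 1 + t := by linarith
  rw [inv_le_inv₀ (Real.exp_pos _) h1]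
  exact h

lemma lam_lower {lam : ℝ → ℝ} (hl : NiceLam lam) {t : ℝ} (ht : 0 ≤ t) :
    Real.log (1+t) ≤ lam t := by
  have h := exp_lam_ge hl t ht
  calc Real.log (1+t) ≤ Real.log (Real.exp (lam t)) :=
        Real.log_le_log (by linarith) h
    _ = lam t := Real.log_exp _

lemma lam_upper {lam : ℝ → ℝ} (hl : NiceLam lam) {t : ℝ} (ht : 0 ≤ t) :
    lam t ≤ 2 * Real.log (1+t) := by
  have h := exp_lam_le hl t ht
  have h1 : (0:ℝ) < 1 + t := by linarith
  calc lam t = Real.log (Real.exp (lam t)) := (Real.log_exp _).symm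
    _ ≤ Real.log ((1+t)^2) := Real.log_le_log (Real.exp_pos _) h
    _ = 2 * Real.log (1+t) := by rw [Real.log_pow]; push_cast; ring

lemma exp_div_le {lam : ℝ → ℝ} (hl : NiceLam lam) {t : ℝ} (ht : 0 ≤ t) :
    Real.exp (lam t) ≤ (1 + t) * (1 + lam t) := by
  have hmono := mono_from_deriv
    (F := fun t => (1+t) - Real.exp (lam t) / (1 + lam t))
    (F' := fun t => 1 - (Real.exp (lam t) * deriv lam t * (1 + lam t) -
      Real.exp (lam t) * deriv lam t) / ((1 + lam t)^2))
    ?_ ?_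
  · have h2 := hmono (Set.mem_Ici.mpr (le_refl 0)) (Set.mem_Ici.mpr ht) ht
    simp [hl.2.1] at h2
    have hpos : (0:ℝ) < 1 + lam t := by
      have := lam_nonneg hl t ht; linarith
    rw [div_le_iff₀ hpos] at h2
    nlinarith
  · intro s hs
    have hpos : 1 + lam s ≠ 0 := by
      have := lam_nonneg hl s hs; positivity
    have hd1 : HasDerivAt (fun t:ℝ => 1 + t) 1 s := by
      simpa using (hasDerivAt_id s).const_add 1
    have hd2 : HasDerivAt (fun t => 1 + lam t) (deriv lam s) s :=
      ((hl.1 s).hasDerivAt).const_add 1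
    have hd3 : HasDerivAt (fun t => Real.exp (lam t)) (Real.exp (lam s) * deriv lam s) s :=
      ((hl.1 s).hasDerivAt).exp
    exact hd1.sub (hd3.div hd2 hpos)
  · intro s hs
    show 0 ≤ 1 - (Real.exp (lam s) * deriv lam s * (1 + lam s) -
      Real.exp (lam s) * deriv lam s) / ((1 + lam s)^2)
    rw [lam_deriv_eq hl hs.le]
    have h0 := lam_nonneg hl s hs.le
    have h : Real.exp (lam s) * (Real.exp (-lam s) * (1 + lam s)) = 1 + lam s := by
      rw [← mul_assoc, ← Real.exp_add]; simp
    rw [h]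
    have hpos : (0:ℝ) < (1 + lam s)^2 := by positivity
    rw [sub_nonneg, div_le_one hpos]
    nlinarith

lemma lam_deriv_lower {lam : ℝ → ℝ} (hl : NiceLam lam) {t : ℝ} (ht : 0 ≤ t) :
    (1+t)⁻¹ ≤ deriv lam t := by
  have key := exp_div_le hl ht
  have h0 := lam_nonneg hl t ht
  have h1 : (0:ℝ) < 1 + t := by linarith
  have h3 := Real.exp_pos (lam t)
  rw [lam_deriv_eq hl ht, Real.exp_neg]
  rw [inv_le_iff_one_le_mul₀ h1]
  calc (1:ℝ) = Real.exp (lam t) * (Real.exp (lam t))⁻¹ := (mul_inv_cancel₀ h3.ne').symm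
    _ ≤ ((1+t)*(1+lam t)) * (Real.exp (lam t))⁻¹ :=
        mul_le_mul_of_nonneg_right key (by positivity)
    _ = (Real.exp (lam t))⁻¹ * (1 + lam t) * (1+t) := by ring

end ProofAux
-- chunk2 (appended to c1 for testing)
section Chunk2
open Real MeasureTheory Filter intervalIntegral Set

/-- `1 - e^{-x}(1+x) ≤ x²/2` for `x ≥ 0`. -/
lemma one_sub_expterm {x : ℝ} (hx : 0 ≤ x) : 1 - Real.exp (-x) * (1 + x) ≤ x^2/2 := by
  have hmono := mono_from_deriv (F := fun x => x^2/2 - 1 + Real.exp (-x) * (1 + x))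
    (F' := fun x => x - Real.exp (-x) * x)
    ?_ ?_
  · have h2 := hmono (Set.mem_Ici.mpr (le_refl 0)) (Set.mem_Ici.mpr hx) hx
    simp at h2
    linarith
  · intro s _
    have h1 : HasDerivAt (fun x:ℝ => x^2/2 - 1) s s := by
      have := ((hasDerivAt_pow 2 s).div_const 2).sub_const 1
      simpa using this
    have h2 : HasDerivAt (fun x:ℝ => Real.exp (-x) * (1 + x))
        (Real.exp (-s) * (-1) * (1 + s) + Real.exp (-s) * 1) s := by
      have ha : HasDerivAt (fun x:ℝ => Real.exp (-x)) (Real.exp (-s) * (-1)) s := by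
        have := ((hasDerivAt_id s).neg).exp
        simpa using this
      have hb : HasDerivAt (fun x:ℝ => 1 + x) 1 s := by
        simpa using (hasDerivAt_id s).const_add 1
      exact ha.mul hb
    have := h1.add h2
    refine this.congr_deriv ?_
    ring
  · intro s hs
    show 0 ≤ s - Real.exp (-s) * s
    have h1 : Real.exp (-s) ≤ 1 := by
      rw [Real.exp_le_one_iff]; linarith
    nlinarith

/-- `(1+x)^m ≤ (4(m+1))^m e^{x/4}` for `x ≥ 0`. -/
lemma poly_le_exp (m : ℕ) {x : ℝ} (hx : 0 ≤ x) :
    (1+x)^m ≤ (4*(m+1) : ℝ)^m * Real.exp (x/4) := by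
  have hbase : 1 + x ≤ (4*(m+1) : ℝ) * Real.exp (x/(4*(m+1))) := by
    have hm : (0:ℝ) < 4*(m+1) := by positivity
    have := Real.add_one_le_exp (x/(4*(m+1)))
    have h2 : (4*(m+1):ℝ) * (x/(4*(m+1)) + 1) ≤ (4*(m+1):ℝ) * Real.exp (x/(4*(m+1))) :=
      mul_le_mul_of_nonneg_left this (le_of_lt hm)
    have h3 : (4*(m+1):ℝ) * (x/(4*(m+1)) + 1) = x + 4*(m+1) := by
      field_simp
    nlinarith
  calc (1+x)^m ≤ ((4*(m+1) : ℝ) * Real.exp (x/(4*(m+1))))^m := by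
        apply pow_le_pow_left₀ (by linarith) hbase
    _ = (4*(m+1) : ℝ)^m * Real.exp (x/(4*(m+1)))^m := mul_pow _ _ _
    _ = (4*(m+1) : ℝ)^m * Real.exp (m * (x/(4*(m+1)))) := by
        rw [← Real.exp_nat_mul]
    _ ≤ (4*(m+1) : ℝ)^m * Real.exp (x/4) := by
        apply mul_le_mul_of_nonneg_left _ (by positivity)
        apply Real.exp_le_exp.mpr
        have heq : (m:ℝ) * (x / (4*(m+1))) = x * m / (4*(m+1)) := by ring
        rw [heq, div_le_div_iff₀ (by positivity) (by norm_num)]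
        nlinarith [hx]

/-- interval integrability from continuity on `Ioc` plus boundedness -/
lemma II_of_bound {f : ℝ → ℝ} {a t C : ℝ} (hat : a ≤ t)
    (hc : ContinuousOn f (Set.Ioc a t)) (hb : ∀ s ∈ Set.Ioc a t, |f s| ≤ C) :
    IntervalIntegrable f MeasureTheory.volume a t := by
  rw [intervalIntegrable_iff_integrableOn_Ioc_of_le hat]
  have hmeas : MeasureTheory.AEStronglyMeasurable f
      (MeasureTheory.volume.restrict (Set.Ioc a t)) :=
    hc.aestronglyMeasurable measurableSet_Ioc
  apply MeasureTheory.Integrable.mono' (g := fun _ => C) _ hmeas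
  · rw [MeasureTheory.ae_restrict_iff' measurableSet_Ioc]
    exact MeasureTheory.ae_of_all _ (fun s hs => by simpa using hb s hs)
  · exact MeasureTheory.integrableOn_const measure_Ioc_lt_top.ne

/-- `∫_0^t 1/√(1+s) ds ≤ 2√(1+t)` -/
lemma integral_inv_sqrt {t : ℝ} (ht : 0 ≤ t) :
    ∫ s in (0:ℝ)..t, (Real.sqrt (1+s))⁻¹ = 2*Real.sqrt (1+t) - 2 := by
  have h : ∀ s ∈ Set.uIcc (0:ℝ) t, HasDerivAt (fun s => 2*Real.sqrt (1+s))
      ((Real.sqrt (1+s))⁻¹) s := by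
    intro s hs
    rw [Set.uIcc_of_le ht] at hs
    have hs1 : (0:ℝ) < 1 + s := by have := hs.1; linarith
    have h1 : HasDerivAt (fun s:ℝ => 1 + s) 1 s := by
      simpa using (hasDerivAt_id s).const_add 1
    have h2 := (Real.hasDerivAt_sqrt hs1.ne').comp s h1
    have h3 := h2.const_mul 2
    refine h3.congr_deriv ?_
    have hsq : Real.sqrt (1+s) > 0 := Real.sqrt_pos.mpr hs1
    field_simp
  have hcont : ContinuousOn (fun s => (Real.sqrt (1+s))⁻¹) (Set.uIcc (0:ℝ) t) := by
    rw [Set.uIcc_of_le ht]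
    apply ContinuousOn.inv₀
    · exact (Real.continuous_sqrt.comp (continuous_const.add continuous_id)).continuousOn
    · intro s hs
      have hs1 : (0:ℝ) < 1 + s := by have := hs.1; linarith
      exact (Real.sqrt_pos.mpr hs1).ne'
  have := intervalIntegral.integral_eq_sub_of_hasDerivAt h (hcont.intervalIntegrable)
  rw [this]
  norm_num

/-- `∫_0^t 1/((1+s)√(1+s)) ds ≤ 2` -/
lemma integral_inv_pow32 {t : ℝ} (ht : 0 ≤ t) :
    ∫ s in (0:ℝ)..t, ((1+s) * Real.sqrt (1+s))⁻¹ = 2 - 2*(Real.sqrt (1+t))⁻¹ := by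
  have h : ∀ s ∈ Set.uIcc (0:ℝ) t, HasDerivAt (fun s => -2*(Real.sqrt (1+s))⁻¹)
      (((1+s) * Real.sqrt (1+s))⁻¹) s := by
    intro s hs
    rw [Set.uIcc_of_le ht] at hs
    have hs1 : (0:ℝ) < 1 + s := by have := hs.1; linarith
    have hsq : Real.sqrt (1+s) > 0 := Real.sqrt_pos.mpr hs1
    have h1 : HasDerivAt (fun s:ℝ => 1 + s) 1 s := by
      simpa using (hasDerivAt_id s).const_add 1
    have h2 := (Real.hasDerivAt_sqrt hs1.ne').comp s h1
    have h3 := (h2.inv hsq.ne').const_mul (-2 : ℝ)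
    refine h3.congr_deriv ?_
    have hsq2 : Real.sqrt (1+s) ^ 2 = 1 + s := Real.sq_sqrt hs1.le
    show -2 * (-(1 / (2 * Real.sqrt (1 + s)) * 1) / (Real.sqrt (1+s)) ^ 2)
      = ((1+s) * Real.sqrt (1+s))⁻¹
    rw [hsq2]
    field_simp
  have hcont : ContinuousOn (fun s => ((1+s) * Real.sqrt (1+s))⁻¹) (Set.uIcc (0:ℝ) t) := by
    rw [Set.uIcc_of_le ht]
    apply ContinuousOn.inv₀
    · exact ((continuous_const.add continuous_id).mul
        (Real.continuous_sqrt.comp (continuous_const.add continuous_id))).continuousOn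
    · intro s hs
      have hs1 : (0:ℝ) < 1 + s := by have := hs.1; linarith
      have hsq : Real.sqrt (1+s) > 0 := Real.sqrt_pos.mpr hs1
      positivity
  have := intervalIntegral.integral_eq_sub_of_hasDerivAt h (hcont.intervalIntegrable)
  rw [this]
  simp [Real.sqrt_one]
  ring

/-- `e^{-(3/2)λ(t)} ≤ 1/((1+t)√(1+t))` -/
lemma exp_neg_32 {lam : ℝ → ℝ} (hl : NiceLam lam) {t : ℝ} (ht : 0 ≤ t) :
    Real.exp (-(3/2) * lam t) ≤ ((1+t) * Real.sqrt (1+t))⁻¹ := by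
  have h0 := lam_nonneg hl t ht
  have h1 : (0:ℝ) < 1 + t := by linarith
  have hE := exp_neg_lam_le hl ht
  have hhalf : Real.exp (-lam t / 2) ≤ (Real.sqrt (1+t))⁻¹ := by
    rw [Real.exp_half, ← Real.sqrt_inv]
    exact Real.sqrt_le_sqrt hE
  have hsplit : Real.exp (-(3/2) * lam t) = Real.exp (-lam t) * Real.exp (-lam t / 2) := by
    rw [← Real.exp_add]; ring_nf
  rw [hsplit, mul_inv]
  apply mul_le_mul hE hhalf (le_of_lt (Real.exp_pos _)) (by positivity)
end Chunk2
section Chunk3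
open Real MeasureTheory Filter intervalIntegral Set


lemma tailS_nonneg {Δ : ℕ} {r : ℕ → ℝ} (hr : memR Δ r) {k : ℕ} (hk : 3 ≤ k) :
    0 ≤ tailS Δ r k :=
  Finset.sum_nonneg fun d hd => hr.2.1 d (le_trans hk (Finset.mem_Icc.1 hd).1) (Finset.mem_Icc.1 hd).2

lemma tailS_le_one {Δ : ℕ} {r : ℕ → ℝ} (hr : memR Δ r) {k : ℕ} (hk : 3 ≤ k) :
    tailS Δ r k ≤ 1 := by
  have hsub : Finset.Icc k Δ ⊆ Finset.Icc 3 Δ := Finset.Icc_subset_Icc hk le_rfl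
  have h := Finset.sum_le_sum_of_subset_of_nonneg hsub
    (fun i hi _ => hr.2.1 i (Finset.mem_Icc.1 hi).1 (Finset.mem_Icc.1 hi).2)
  rw [hr.2.2.2] at h
  exact h

lemma r_abs_le {Δ : ℕ} {r : ℕ → ℝ} (hr : memR Δ r) {k : ℕ} (hk : 2 ≤ k) :
    |r k| ≤ 1 := by
  rcases eq_or_lt_of_le hk with h | h
  · rw [← h, hr.1]; norm_num
  · have h3 : 3 ≤ k := h
    by_cases hkΔ : k ≤ Δ
    · have h0 : 0 ≤ r k := hr.2.1 k h3 hkΔ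
      rw [abs_of_nonneg h0]
      have := Finset.single_le_sum (f := r)
        (fun i hi => hr.2.1 i (Finset.mem_Icc.1 hi).1 (Finset.mem_Icc.1 hi).2)
        (Finset.mem_Icc.mpr ⟨h3, hkΔ⟩)
      rw [hr.2.2.2] at this
      exact this
    · rw [hr.2.2.1 k (not_le.mp hkΔ)]; norm_num

def Qsum' (Δ : ℕ) (r : ℕ → ℝ) (x : ℝ) : ℝ :=
  ∑ k ∈ Finset.Icc 2 (Δ-1), x^k / (Nat.factorial k : ℝ) * tailS Δ r (k+1)
def Psum' (Δ : ℕ) (r : ℕ → ℝ) (x : ℝ) : ℝ :=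
  ∑ k ∈ Finset.range (Δ-1), x^k / (Nat.factorial k : ℝ) * r (k+2)
def fintg (Δ : ℕ) (r : ℕ → ℝ) (x : ℝ) : ℝ := Real.exp x / (1+x)^2 * Qsum' Δ r x
def Ffun (Δ : ℕ) (r : ℕ → ℝ) (y : ℝ) : ℝ := ∫ x in (0:ℝ)..y, fintg Δ r x

lemma term_le {x : ℝ} (hx : 0 ≤ x) {k Δ : ℕ} (hk : k ≤ Δ) :
    x^k / (Nat.factorial k : ℝ) ≤ (1+x)^Δ := by
  have h1 : x^k / (Nat.factorial k : ℝ) ≤ x^k := by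
    apply div_le_self (by positivity)
    exact_mod_cast Nat.one_le_iff_ne_zero.mpr (Nat.factorial_pos k).ne'
  have h2 : x^k ≤ (1+x)^k := pow_le_pow_left₀ hx (by linarith) k
  have h3 : (1+x)^k ≤ (1+x)^Δ := pow_le_pow_right₀ (by linarith) hk
  linarith

lemma Qsum'_nonneg {Δ : ℕ} {r : ℕ → ℝ} (hr : memR Δ r) {x : ℝ} (hx : 0 ≤ x) :
    0 ≤ Qsum' Δ r x := by
  apply Finset.sum_nonneg
  intro k hk
  have h1 : 3 ≤ k + 1 := by
    have := (Finset.mem_Icc.1 hk).1; omega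
  have := tailS_nonneg hr h1
  positivity

lemma Qsum'_le {Δ : ℕ} {r : ℕ → ℝ} (hr : memR Δ r) {x : ℝ} (hx : 0 ≤ x) :
    Qsum' Δ r x ≤ Δ * (1+x)^Δ := by
  have hcard : (Finset.Icc 2 (Δ-1)).card ≤ Δ := by
    rw [Nat.card_Icc]; omega
  calc Qsum' Δ r x ≤ ∑ _k ∈ Finset.Icc 2 (Δ-1), (1+x)^Δ := by
        apply Finset.sum_le_sum
        intro k hk
        have h1 : 3 ≤ k + 1 := by have := (Finset.mem_Icc.1 hk).1; omega
        have h2 : k ≤ Δ := by have := (Finset.mem_Icc.1 hk).2; omega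
        calc x^k / (Nat.factorial k : ℝ) * tailS Δ r (k+1)
            ≤ x^k / (Nat.factorial k : ℝ) * 1 := by
              apply mul_le_mul_of_nonneg_left (tailS_le_one hr h1) (by positivity)
          _ = x^k / (Nat.factorial k : ℝ) := mul_one _
          _ ≤ (1+x)^Δ := term_le hx h2
    _ = (Finset.Icc 2 (Δ-1)).card * (1+x)^Δ := by rw [Finset.sum_const, nsmul_eq_mul]
    _ ≤ Δ * (1+x)^Δ := by
        apply mul_le_mul_of_nonneg_right _ (by positivity)
        exact_mod_cast hcard

lemma Psum'_abs_le {Δ : ℕ} {r : ℕ → ℝ} (hr : memR Δ r) {x : ℝ} (hx : 0 ≤ x) :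
    |Psum' Δ r x| ≤ Δ * (1+x)^Δ := by
  have hcard : (Finset.range (Δ-1)).card ≤ Δ := by
    rw [Finset.card_range]; omega
  calc |Psum' Δ r x| ≤ ∑ k ∈ Finset.range (Δ-1), |x^k / (Nat.factorial k : ℝ) * r (k+2)| :=
        Finset.abs_sum_le_sum_abs _ _
    _ ≤ ∑ _k ∈ Finset.range (Δ-1), (1+x)^Δ := by
        apply Finset.sum_le_sum
        intro k hk
        have h2 : k + 2 ≤ Δ + 2 := by have := Finset.mem_range.1 hk; omega
        rw [abs_mul]
        calc |x^k / (Nat.factorial k : ℝ)| * |r (k+2)|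
            ≤ |x^k / (Nat.factorial k : ℝ)| * 1 :=
              mul_le_mul_of_nonneg_left (r_abs_le hr (by omega)) (abs_nonneg _)
          _ = x^k / (Nat.factorial k : ℝ) := by
              rw [mul_one, abs_of_nonneg (by positivity)]
          _ ≤ (1+x)^Δ := term_le hx (by have := Finset.mem_range.1 hk; omega)
    _ = (Finset.range (Δ-1)).card * (1+x)^Δ := by rw [Finset.sum_const, nsmul_eq_mul]
    _ ≤ Δ * (1+x)^Δ := by
        apply mul_le_mul_of_nonneg_right _ (by positivity)
        exact_mod_cast hcard

lemma Qsum'_continuous (Δ : ℕ) (r : ℕ → ℝ) : Continuous (Qsum' Δ r) := by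
  apply continuous_finset_sum
  intro k _
  exact (continuous_pow k).div_const _ |>.mul continuous_const

lemma Psum'_continuous (Δ : ℕ) (r : ℕ → ℝ) : Continuous (Psum' Δ r) := by
  apply continuous_finset_sum
  intro k _
  exact (continuous_pow k).div_const _ |>.mul continuous_const

lemma fintg_continuousAt {Δ : ℕ} {r : ℕ → ℝ} {x : ℝ} (hx : -1 < x) :
    ContinuousAt (fintg Δ r) x := by
  apply ContinuousAt.mul
  · apply ContinuousAt.div Real.continuous_exp.continuousAt
    · exact ((continuous_const.add continuous_id).pow 2).continuousAt
    · have : (0:ℝ) < 1 + x := by linarith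
      positivity
  · exact (Qsum'_continuous Δ r).continuousAt

lemma fintg_contOn {Δ : ℕ} {r : ℕ → ℝ} {a b : ℝ} (ha : -1 < a) :
    ContinuousOn (fintg Δ r) (Set.Icc a b) := by
  intro x hx
  exact (fintg_continuousAt (by linarith [hx.1])).continuousWithinAt

lemma fintg_nonneg {Δ : ℕ} {r : ℕ → ℝ} (hr : memR Δ r) {x : ℝ} (hx : 0 ≤ x) :
    0 ≤ fintg Δ r x := by
  have h1 := Qsum'_nonneg hr hx
  have h2 : (0:ℝ) < 1 + x := by linarith
  unfold fintg
  positivity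

lemma fintg_le {Δ : ℕ} {r : ℕ → ℝ} (hr : memR Δ r) {x : ℝ} (hx : 0 ≤ x) :
    fintg Δ r x ≤ Real.exp x * (Δ * (1+x)^Δ) := by
  unfold fintg
  have h2 : (0:ℝ) < 1 + x := by linarith
  have h3 : Real.exp x / (1+x)^2 ≤ Real.exp x := by
    apply div_le_self (Real.exp_pos x).le
    nlinarith
  calc Real.exp x / (1+x)^2 * Qsum' Δ r x ≤ Real.exp x * Qsum' Δ r x := by
        apply mul_le_mul_of_nonneg_right h3 (Qsum'_nonneg hr hx)
    _ ≤ Real.exp x * (Δ * (1+x)^Δ) :=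
        mul_le_mul_of_nonneg_left (Qsum'_le hr hx) (Real.exp_pos x).le

lemma fintg_II {Δ : ℕ} {r : ℕ → ℝ} {y : ℝ} (hy : 0 ≤ y) :
    IntervalIntegrable (fintg Δ r) MeasureTheory.volume 0 y := by
  apply ContinuousOn.intervalIntegrable
  rw [Set.uIcc_of_le hy]
  exact fintg_contOn (by norm_num)

lemma Ffun_nonneg {Δ : ℕ} {r : ℕ → ℝ} (hr : memR Δ r) {y : ℝ} (hy : 0 ≤ y) :
    0 ≤ Ffun Δ r y := by
  apply intervalIntegral.integral_nonneg hy
  intro x hx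
  exact fintg_nonneg hr hx.1

lemma Ffun_le {Δ : ℕ} {r : ℕ → ℝ} (hr : memR Δ r) {y : ℝ} (hy : 0 ≤ y) :
    Ffun Δ r y ≤ Δ * (1+y)^Δ * Real.exp y := by
  have hmono : Ffun Δ r y ≤ ∫ x in (0:ℝ)..y, Real.exp x * (Δ * (1+y)^Δ) := by
    apply intervalIntegral.integral_mono_on hy (fintg_II hy)
    · exact (Real.continuous_exp.mul continuous_const).intervalIntegrable 0 y
    · intro x hx
      calc fintg Δ r x ≤ Real.exp x * (Δ * (1+x)^Δ) := fintg_le hr hx.1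
        _ ≤ Real.exp x * (Δ * (1+y)^Δ) := by
            apply mul_le_mul_of_nonneg_left _ (Real.exp_pos x).le
            apply mul_le_mul_of_nonneg_left _ (by positivity)
            apply pow_le_pow_left₀ (by linarith [hx.1]) (by linarith [hx.2])
  have heval : ∫ x in (0:ℝ)..y, Real.exp x * (Δ * (1+y)^Δ)
      = (Real.exp y - 1) * (Δ * (1+y)^Δ) := by
    rw [intervalIntegral.integral_mul_const, integral_exp]
    norm_num
  rw [heval] at hmono
  have h1 : (Real.exp y - 1) * (Δ * (1+y)^Δ) ≤ Real.exp y * (Δ * (1+y)^Δ) := by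
    apply mul_le_mul_of_nonneg_right (by linarith) (by positivity)
  calc Ffun Δ r y ≤ (Real.exp y - 1) * (Δ * (1+y)^Δ) := hmono
    _ ≤ Real.exp y * (Δ * (1+y)^Δ) := h1
    _ = Δ * (1+y)^Δ * Real.exp y := by ring

lemma Ffun_hasDeriv {Δ : ℕ} {r : ℕ → ℝ} {y : ℝ} (hy : 0 ≤ y) :
    HasDerivAt (Ffun Δ r) (fintg Δ r y) y := by
  apply intervalIntegral.integral_hasDerivAt_right (fintg_II hy)
  · apply ContinuousOn.stronglyMeasurableAtFilter (s := Set.Ioi (-1:ℝ)) isOpen_Ioi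
    · intro x hx
      exact (fintg_continuousAt hx).continuousWithinAt
    · exact Set.mem_Ioi.mpr (by linarith)
  · exact fintg_continuousAt (by linarith)
end Chunk3
section Chunk4
open Real MeasureTheory Filter intervalIntegral Set

def Elam (lam : ℝ → ℝ) (t : ℝ) : ℝ := Real.exp (-lam t) * (1 + lam t)
def ElamD (lam : ℝ → ℝ) (t : ℝ) : ℝ := -(lam t * deriv lam t * Real.exp (-lam t))
def DLE (lam : ℝ → ℝ) (Δ : ℕ) (r : ℕ → ℝ) (t : ℝ) : ℝ :=
  ElamD lam t * Ffun Δ r (lam t) + deriv lam t * (fintg Δ r (lam t) * deriv lam t)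

lemma LamErr_eq (lam : ℝ → ℝ) (Δ : ℕ) (r : ℕ → ℝ) :
    LamErr lam Δ r = fun t => deriv lam t * Ffun Δ r (lam t) := rfl

lemma Elam_hasDeriv {lam : ℝ → ℝ} (hl : NiceLam lam) (t : ℝ) :
    HasDerivAt (Elam lam) (ElamD lam t) t := by
  have ha : HasDerivAt (fun t => Real.exp (-lam t)) (Real.exp (-lam t) * (-deriv lam t)) t :=
    ((hl.1 t).hasDerivAt).neg.exp
  have hb : HasDerivAt (fun t => 1 + lam t) (deriv lam t) t :=
    ((hl.1 t).hasDerivAt).const_add 1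
  have := ha.mul hb
  refine this.congr_deriv ?_
  unfold ElamD
  ring

lemma deriv_lam_eventuallyEq {lam : ℝ → ℝ} (hl : NiceLam lam) {t : ℝ} (ht : 0 < t) :
    deriv lam =ᶠ[nhds t] Elam lam := by
  filter_upwards [isOpen_Ioi.mem_nhds (Set.mem_Ioi.mpr ht)] with s hs
  exact hl.2.2 s (le_of_lt hs)

lemma deriv_lam_hasDeriv {lam : ℝ → ℝ} (hl : NiceLam lam) {t : ℝ} (ht : 0 < t) :
    HasDerivAt (deriv lam) (ElamD lam t) t :=
  (Elam_hasDeriv hl t).congr_of_eventuallyEq (deriv_lam_eventuallyEq hl ht)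

lemma LamErr_hasDeriv {lam : ℝ → ℝ} (hl : NiceLam lam) (Δ : ℕ) (r : ℕ → ℝ)
    {t : ℝ} (ht : 0 < t) :
    HasDerivAt (LamErr lam Δ r) (DLE lam Δ r t) t := by
  have h0 : 0 ≤ lam t := lam_nonneg hl t ht.le
  have hd1 := deriv_lam_hasDeriv hl ht
  have hd2 : HasDerivAt (fun t => Ffun Δ r (lam t)) (fintg Δ r (lam t) * deriv lam t) t :=
    (Ffun_hasDeriv h0).comp t (hl.1 t).hasDerivAt
  have := hd1.mul hd2
  rw [LamErr_eq]
  exact this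

lemma Herr_eq {lam : ℝ → ℝ} (hl : NiceLam lam) (Δ : ℕ) (r : ℕ → ℝ)
    {t : ℝ} (ht : 0 < t) :
    Herr lam Δ r t = Real.exp (-lam t) *
      (DLE lam Δ r t - deriv lam t * (deriv lam t * Ffun Δ r (lam t))
        + deriv lam t * Psum' Δ r (lam t)) := by
  unfold Herr
  rw [(LamErr_hasDeriv hl Δ r ht).deriv]
  rfl

/-- the master constant -/
def CH (Δ : ℕ) : ℝ := 4*Δ*(4*((Δ:ℝ)+5))^(Δ+4)

lemma CH_pos {Δ : ℕ} (hΔ : 3 ≤ Δ) : 0 < CH Δ := by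
  unfold CH
  have : (0:ℝ) < Δ := by exact_mod_cast (by omega : 0 < Δ)
  positivity

lemma Herr_bound {lam : ℝ → ℝ} (hl : NiceLam lam) {Δ : ℕ} (hΔ : 3 ≤ Δ) {r : ℕ → ℝ}
    (hr : memR Δ r) {t : ℝ} (ht : 0 < t) :
    |Herr lam Δ r t| * (1 + lam t)^2 ≤ CH Δ * Real.exp (-(3/2) * lam t) := by
  set L := lam t with hLdef
  set e := Real.exp (-L) with hedef
  set w := Real.exp L with hwdef
  set E := deriv lam t with hEdef
  set F := Ffun Δ r L with hFdef
  set f := fintg Δ r L with hfdef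
  set P := Psum' Δ r L with hPdef
  set X := (1+L)^Δ with hXdef
  have hL : 0 ≤ L := lam_nonneg hl t ht.le
  have he : 0 < e := Real.exp_pos _
  have hw : 0 < w := Real.exp_pos _
  have hew : e * w = 1 := by rw [hedef, hwdef, ← Real.exp_add]; simp
  have hE : E = e * (1 + L) := by
    rw [hEdef, hedef, hLdef]; exact hl.2.2 t ht.le
  have hEpos : 0 < E := lam_deriv_pos hl ht.le
  have hF0 : 0 ≤ F := Ffun_nonneg hr hL
  have hFle : F ≤ Δ * X * w := by
    have := Ffun_le hr hL; rw [hFdef, hXdef, hwdef]; linarith [this]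
  have hf0 : 0 ≤ f := fintg_nonneg hr hL
  have hfle : f ≤ w * (Δ * X) := by
    have := fintg_le hr hL; rw [hfdef, hXdef, hwdef]; linarith [this]
  have hPle : |P| ≤ Δ * X := Psum'_abs_le hr hL
  have hX1 : (1:ℝ) ≤ 1 + L := by linarith
  have hX0 : 0 < X := by positivity
  -- step 1 : triangle inequality
  have habs : |Herr lam Δ r t| ≤ e * (L*E*e*F + E*(f*E) + E*(E*F) + E*|P|) := by
    rw [Herr_eq hl Δ r ht]
    rw [abs_mul, abs_of_pos he]
    apply mul_le_mul_of_nonneg_left _ he.le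
    have hDLE : |DLE lam Δ r t| ≤ L*E*e*F + E*(f*E) := by
      unfold DLE ElamD
      calc |(-(lam t * deriv lam t * Real.exp (-lam t))) * Ffun Δ r (lam t)
            + deriv lam t * (fintg Δ r (lam t) * deriv lam t)|
          ≤ |(-(lam t * deriv lam t * Real.exp (-lam t))) * Ffun Δ r (lam t)|
            + |deriv lam t * (fintg Δ r (lam t) * deriv lam t)| := abs_add_le _ _
        _ = L*E*e*F + E*(f*E) := by
            simp only [abs_mul, abs_neg]
            rw [← hLdef, ← hEdef, ← hedef, ← hFdef, ← hfdef]
            simp only [abs_of_nonneg hL, abs_of_pos hEpos, abs_of_pos he,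
              abs_of_nonneg hF0, abs_of_nonneg hf0]
    have htri : |DLE lam Δ r t - E*(E*F) + E*P| ≤ |DLE lam Δ r t| + E*(E*F) + E*|P| := by
      have h1 := abs_add_le (DLE lam Δ r t - E*(E*F)) (E*P)
      have h2 := abs_add_le (DLE lam Δ r t) (-(E*(E*F)))
      rw [abs_neg, ← sub_eq_add_neg] at h2
      have h3 : |E*(E*F)| = E*(E*F) := abs_of_nonneg (by positivity)
      have h4 : |E*P| = E*|P| := by rw [abs_mul, abs_of_pos hEpos]
      rw [h3] at h2
      rw [h4] at h1
      linarith
    calc |DLE lam Δ r t - E*(E*F) + E*P| ≤ |DLE lam Δ r t| + E*(E*F) + E*|P| := htri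
      _ ≤ (L*E*e*F + E*(f*E)) + E*(E*F) + E*|P| := by linarith [hDLE]
      _ = L*E*e*F + E*(f*E) + E*(E*F) + E*|P| := by ring
  -- step 2: multiply and simplify
  have hstep2 : e * (L*E*e*F + E*(f*E) + E*(E*F) + E*|P|) * (1+L)^2
      ≤ 4*Δ*X*(1+L)^4*(e*e) := by
    have hb1 : e * (L*E*e*F + E*(f*E) + E*(E*F) + E*|P|) * (1+L)^2
        ≤ e * (L*E*e*(Δ*X*w) + E*((w*(Δ*X))*E) + E*(E*(Δ*X*w)) + E*(Δ*X)) * (1+L)^2 := by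
      apply mul_le_mul_of_nonneg_right _ (by positivity)
      apply mul_le_mul_of_nonneg_left _ he.le
      gcongr
    have hb2 : e * (L*E*e*(Δ*X*w) + E*((w*(Δ*X))*E) + E*(E*(Δ*X*w)) + E*(Δ*X)) * (1+L)^2
        = (e*w)*((e*e)*(Δ*X)*(L*(1+L)^3)) + (e*w)*((e*e)*(Δ*X)*((1+L)^4))
          + (e*w)*((e*e)*(Δ*X)*((1+L)^4)) + (e*e)*(Δ*X)*((1+L)^3) := by
      rw [hE]; ring
    have hb3 : (e*w)*((e*e)*(Δ*X)*(L*(1+L)^3)) + (e*w)*((e*e)*(Δ*X)*((1+L)^4))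
          + (e*w)*((e*e)*(Δ*X)*((1+L)^4)) + (e*e)*(Δ*X)*((1+L)^3)
        = (e*e)*(Δ*X)*(L*(1+L)^3 + 2*(1+L)^4 + (1+L)^3) := by
      rw [hew]; ring
    have hb4 : L*(1+L)^3 + 2*(1+L)^4 + (1+L)^3 ≤ 4*(1+L)^4 := by
      have h5 : L*(1+L)^3 ≤ (1+L)^4 := by
        have : (1+L)^4 = (1+L)*(1+L)^3 := by ring
        rw [this]
        apply mul_le_mul_of_nonneg_right (by linarith) (by positivity)
      have h6 : (1+L)^3 ≤ (1+L)^4 := by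
        have : (1+L)^4 = (1+L)*(1+L)^3 := by ring
        nlinarith [pow_pos (show (0:ℝ) < 1+L by linarith) 3]
      linarith
    calc e * (L*E*e*F + E*(f*E) + E*(E*F) + E*|P|) * (1+L)^2
        ≤ e * (L*E*e*(Δ*X*w) + E*((w*(Δ*X))*E) + E*(E*(Δ*X*w)) + E*(Δ*X)) * (1+L)^2 := hb1
      _ = (e*e)*(Δ*X)*(L*(1+L)^3 + 2*(1+L)^4 + (1+L)^3) := by rw [hb2, hb3]
      _ ≤ (e*e)*(Δ*X)*(4*(1+L)^4) := by
          apply mul_le_mul_of_nonneg_left hb4 (by positivity)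
      _ = 4*Δ*X*(1+L)^4*(e*e) := by ring
  -- step 3: final poly-to-exp
  have hfinal : 4*(Δ:ℝ)*X*(1+L)^4*(e*e) ≤ CH Δ * Real.exp (-(3/2) * L) := by
    have hpoly : X*(1+L)^4 ≤ (4*((Δ:ℝ)+5))^(Δ+4) * Real.exp (L/4) := by
      have hpe := poly_le_exp (Δ+4) hL
      have hcast : (4*((↑(Δ+4):ℝ)+1)) = 4*((Δ:ℝ)+5) := by push_cast; ring
      rw [hcast] at hpe
      rw [hXdef, ← pow_add]
      exact hpe
    have hee : e*e = Real.exp (-2*L) := by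
      rw [hedef, ← Real.exp_add]; ring_nf
    have hcomb : Real.exp (L/4) * Real.exp (-2*L) = Real.exp (-(7/4)*L) := by
      rw [← Real.exp_add]; ring_nf
    have hle : Real.exp (-(7/4)*L) ≤ Real.exp (-(3/2)*L) := by
      apply Real.exp_le_exp.mpr; linarith
    calc 4*(Δ:ℝ)*X*(1+L)^4*(e*e)
        = 4*(Δ:ℝ)*(X*(1+L)^4)*(e*e) := by ring
      _ ≤ 4*(Δ:ℝ)*((4*((Δ:ℝ)+5))^(Δ+4) * Real.exp (L/4))*(e*e) := by
          apply mul_le_mul_of_nonneg_right _ (by positivity)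
          apply mul_le_mul_of_nonneg_left hpoly (by positivity)
      _ = CH Δ * (Real.exp (L/4) * Real.exp (-2*L)) := by rw [hee]; unfold CH; ring
      _ = CH Δ * Real.exp (-(7/4)*L) := by rw [hcomb]
      _ ≤ CH Δ * Real.exp (-(3/2)*L) := by
          apply mul_le_mul_of_nonneg_left hle (CH_pos hΔ).le
  calc |Herr lam Δ r t| * (1+L)^2
      ≤ e * (L*E*e*F + E*(f*E) + E*(E*F) + E*|P|) * (1+L)^2 := by
        apply mul_le_mul_of_nonneg_right habs (by positivity)
    _ ≤ 4*Δ*X*(1+L)^4*(e*e) := hstep2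
    _ ≤ CH Δ * Real.exp (-(3/2) * L) := hfinal

lemma Herr_contOn {lam : ℝ → ℝ} (hl : NiceLam lam) (Δ : ℕ) (r : ℕ → ℝ) :
    ContinuousOn (Herr lam Δ r) (Set.Ioi 0) := by
  have hEcont : Continuous (Elam lam) := by
    apply Continuous.mul
    · exact Real.continuous_exp.comp (hl.1.continuous.neg)
    · exact continuous_const.add hl.1.continuous
  have hdcont : ContinuousOn (deriv lam) (Set.Ioi 0) := by
    apply ContinuousOn.congr hEcont.continuousOn
    intro s hs
    exact hl.2.2 s (le_of_lt hs)
  have hFcont : ContinuousOn (fun t => Ffun Δ r (lam t)) (Set.Ioi 0) := by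
    intro s hs
    have h0 : 0 ≤ lam s := lam_nonneg hl s (le_of_lt hs)
    exact ((Ffun_hasDeriv h0).comp s (hl.1 s).hasDerivAt).continuousAt.continuousWithinAt
  have hfcont : ContinuousOn (fun t => fintg Δ r (lam t)) (Set.Ioi 0) := by
    intro s hs
    have h0 : 0 ≤ lam s := lam_nonneg hl s (le_of_lt hs)
    exact ((fintg_continuousAt (by linarith)).comp
      (hl.1.continuous.continuousAt)).continuousWithinAt
  have hexp : ContinuousOn (fun t => Real.exp (-lam t)) (Set.Ioi 0) :=
    (Real.continuous_exp.comp hl.1.continuous.neg).continuousOn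
  have hlamc : ContinuousOn lam (Set.Ioi 0) := hl.1.continuous.continuousOn
  have hPcont : ContinuousOn (fun t => Psum' Δ r (lam t)) (Set.Ioi 0) :=
    ((Psum'_continuous Δ r).comp hl.1.continuous).continuousOn
  have hform : Set.EqOn (Herr lam Δ r) (fun t => Real.exp (-lam t) *
      ((ElamD lam t * Ffun Δ r (lam t) + deriv lam t * (fintg Δ r (lam t) * deriv lam t))
        - deriv lam t * (deriv lam t * Ffun Δ r (lam t))
        + deriv lam t * Psum' Δ r (lam t))) (Set.Ioi 0) := by
    intro s hs
    rw [Herr_eq hl Δ r hs]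
    rfl
  apply ContinuousOn.congr _ hform
  apply ContinuousOn.mul hexp
  apply ContinuousOn.add
  apply ContinuousOn.sub
  · apply ContinuousOn.add
    · apply ContinuousOn.mul _ hFcont
      unfold ElamD
      apply ContinuousOn.neg
      exact (hlamc.mul hdcont).mul hexp
    · exact hdcont.mul (hfcont.mul hdcont)
  · exact hdcont.mul (hdcont.mul hFcont)
  · exact hdcont.mul hPcont
end Chunk4
section Chunk5
open Real MeasureTheory Filter intervalIntegral Set

def mfun (lam : ℝ → ℝ) (s : ℝ) : ℝ := (deriv lam s - 1)/(lam s)^2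
def Kfun (lam : ℝ → ℝ) (t : ℝ) : ℝ := ∫ s in (0:ℝ)..t, mfun lam s

lemma uAux_eq (lam : ℝ → ℝ) : uAux lam = fun t => 1 + lam t * Kfun lam t := rfl

lemma lam_pos {lam : ℝ → ℝ} (hl : NiceLam lam) {s : ℝ} (hs : 0 < s) : 0 < lam s := by
  have h := lam_lower hl hs.le
  have : 0 < Real.log (1+s) := Real.log_pos (by linarith)
  linarith

lemma m_abs_le_half {lam : ℝ → ℝ} (hl : NiceLam lam) {s : ℝ} (hs : 0 ≤ s) :
    |mfun lam s| ≤ 1/2 := by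
  by_cases h0 : lam s = 0
  · unfold mfun; rw [h0]; norm_num
  · have hpos : 0 < lam s := lt_of_le_of_ne (lam_nonneg hl s hs) (Ne.symm h0)
    unfold mfun
    rw [lam_deriv_eq hl hs, abs_div]
    have h1 : Real.exp (-lam s) * (1 + lam s) ≤ 1 := by
      have := lam_deriv_le_one hl hs; rw [lam_deriv_eq hl hs] at this; exact this
    have h2 : 1 - Real.exp (-lam s) * (1 + lam s) ≤ (lam s)^2/2 := one_sub_expterm (le_of_lt hpos)
    have h3 : |Real.exp (-lam s) * (1 + lam s) - 1| ≤ (lam s)^2/2 := by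
      rw [abs_of_nonpos (by linarith)]; linarith
    have h4 : |(lam s)^2| = (lam s)^2 := abs_of_pos (by positivity)
    rw [h4, div_le_iff₀ (by positivity)]
    calc |Real.exp (-lam s) * (1 + lam s) - 1| ≤ (lam s)^2/2 := h3
      _ = 1/2 * (lam s)^2 := by ring

lemma m_abs_le_invsq {lam : ℝ → ℝ} (hl : NiceLam lam) {s : ℝ} (hs : 0 < s) :
    |mfun lam s| ≤ ((lam s)^2)⁻¹ := by
  have hpos := lam_pos hl hs
  unfold mfun
  rw [lam_deriv_eq hl hs.le, abs_div]
  have h1 : Real.exp (-lam s) * (1 + lam s) ≤ 1 := by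
    have := lam_deriv_le_one hl hs.le; rw [lam_deriv_eq hl hs.le] at this; exact this
  have h0 : 0 ≤ Real.exp (-lam s) * (1 + lam s) := by positivity
  have h3 : |Real.exp (-lam s) * (1 + lam s) - 1| ≤ 1 := by
    rw [abs_of_nonpos (by linarith)]; linarith
  have h4 : |(lam s)^2| = (lam s)^2 := abs_of_pos (by positivity)
  rw [h4, div_le_iff₀ (by positivity), inv_mul_cancel₀ (by positivity)]
  exact h3

lemma m_contOn {lam : ℝ → ℝ} (hl : NiceLam lam) : ContinuousOn (mfun lam) (Set.Ioi 0) := by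
  have hform : Set.EqOn (mfun lam) (fun s => (Elam lam s - 1)/(lam s)^2) (Set.Ioi 0) := by
    intro s hs
    unfold mfun Elam
    rw [hl.2.2 s (le_of_lt hs)]
  apply ContinuousOn.congr _ hform
  apply ContinuousOn.div
  · apply Continuous.continuousOn
    exact ((Real.continuous_exp.comp hl.1.continuous.neg).mul
      (continuous_const.add hl.1.continuous)).sub continuous_const
  · exact (hl.1.continuous.pow 2).continuousOn
  · intro s hs
    have := lam_pos hl hs
    positivity

lemma m_II {lam : ℝ → ℝ} (hl : NiceLam lam) {a t : ℝ} (ha : 0 ≤ a) (hat : a ≤ t) :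
    IntervalIntegrable (mfun lam) MeasureTheory.volume a t := by
  apply II_of_bound hat ((m_contOn hl).mono ?_) (fun s hs => m_abs_le_half hl (by linarith [hs.1]))
  intro s hs
  exact Set.mem_Ioi.mpr (lt_of_le_of_lt ha hs.1)

lemma K_hasDeriv {lam : ℝ → ℝ} (hl : NiceLam lam) {t : ℝ} (ht : 0 < t) :
    HasDerivAt (Kfun lam) (mfun lam t) t := by
  apply intervalIntegral.integral_hasDerivAt_right (m_II hl (le_refl 0) ht.le)
  · exact (m_contOn hl).stronglyMeasurableAtFilter isOpen_Ioi _ (Set.mem_Ioi.mpr ht)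
  · exact (m_contOn hl).continuousAt (isOpen_Ioi.mem_nhds (Set.mem_Ioi.mpr ht))

lemma K_abs_le {lam : ℝ → ℝ} (hl : NiceLam lam) {t : ℝ} (ht : 0 ≤ t) :
    |Kfun lam t| ≤ t/2 := by
  have h := intervalIntegral.norm_integral_le_of_norm_le_const
    (C := 1/2) (f := mfun lam) (a := 0) (b := t) ?_
  · rw [Real.norm_eq_abs] at h
    calc |Kfun lam t| ≤ 1/2 * |t - 0| := h
      _ = t/2 := by rw [abs_of_nonneg (by linarith)]; ring
  · intro x hx
    rw [Set.uIoc_of_le ht] at hx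
    rw [Real.norm_eq_abs]
    exact m_abs_le_half hl hx.1.le

lemma K_split {lam : ℝ → ℝ} (hl : NiceLam lam) {t : ℝ} (ht : 8 ≤ t) :
    |Kfun lam t| ≤ Real.sqrt (1+t) + 4*(1+t)/(Real.log (1+t))^2 := by
  set τ := Real.sqrt (1+t) - 1 with hτdef
  have h9 : (9:ℝ) ≤ 1 + t := by linarith
  have hsq3 : (3:ℝ) ≤ Real.sqrt (1+t) := by
    rw [show (3:ℝ) = Real.sqrt 9 by rw [show (9:ℝ) = 3^2 by norm_num, Real.sqrt_sq (by norm_num)]]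
    exact Real.sqrt_le_sqrt h9
  have hτpos : 0 < τ := by rw [hτdef]; linarith
  have hτt : τ ≤ t := by
    have h := Real.sqrt_le_sqrt (show (1+t) ≤ (1+t)^2 by nlinarith)
    rw [Real.sqrt_sq (by linarith : (0:ℝ) ≤ 1+t)] at h
    rw [hτdef]; linarith
  have hLpos : 0 < Real.log (1+t) := Real.log_pos (by linarith)
  have hlogτ : Real.log (1+τ) = Real.log (1+t)/2 := by
    rw [hτdef, show (1 + (Real.sqrt (1+t) - 1)) = Real.sqrt (1+t) by ring,
      Real.log_sqrt (by linarith)]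
  have hsplit : Kfun lam t = Kfun lam τ + ∫ s in τ..t, mfun lam s := by
    unfold Kfun
    rw [intervalIntegral.integral_add_adjacent_intervals (m_II hl (le_refl 0) hτpos.le)
      (m_II hl hτpos.le hτt)]
  have h1 : |Kfun lam τ| ≤ τ/2 := K_abs_le hl hτpos.le
  have h2 : |∫ s in τ..t, mfun lam s| ≤ 4/(Real.log (1+t))^2 * (t - τ) := by
    have h := intervalIntegral.norm_integral_le_of_norm_le_const
      (C := 4/(Real.log (1+t))^2) (f := mfun lam) (a := τ) (b := t) ?_
    · rw [Real.norm_eq_abs] at h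
      calc |∫ s in τ..t, mfun lam s| ≤ 4/(Real.log (1+t))^2 * |t - τ| := h
        _ = 4/(Real.log (1+t))^2 * (t - τ) := by rw [abs_of_nonneg (by linarith)]
    · intro x hx
      rw [Set.uIoc_of_le hτt] at hx
      rw [Real.norm_eq_abs]
      have hxτ : τ ≤ x := hx.1.le
      have hx0 : 0 < x := hτpos.trans hx.1
      have hlamx : Real.log (1+t)/2 ≤ lam x := by
        calc Real.log (1+t)/2 = Real.log (1+τ) := hlogτ.symm
          _ ≤ lam τ := lam_lower hl hτpos.le
          _ ≤ lam x := lam_mono hl (Set.mem_Ici.mpr hτpos.le) (Set.mem_Ici.mpr hx0.le) hxτ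
      have hlamxpos : 0 < lam x := by linarith
      calc |mfun lam x| ≤ ((lam x)^2)⁻¹ := m_abs_le_invsq hl hx0
        _ ≤ ((Real.log (1+t)/2)^2)⁻¹ := by
            apply inv_anti₀ (by positivity)
            apply pow_le_pow_left₀ (by positivity) hlamx
        _ = 4/(Real.log (1+t))^2 := by field_simp; ring
  rw [hsplit]
  have hτle : τ/2 ≤ Real.sqrt (1+t) := by rw [hτdef]; linarith
  have h3 : 4/(Real.log (1+t))^2 * (t - τ) ≤ 4*(1+t)/(Real.log (1+t))^2 := by
    rw [div_mul_eq_mul_div]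
    apply div_le_div_of_nonneg_right _ (by positivity)
    · nlinarith [hτpos]
  calc |Kfun lam τ + ∫ s in τ..t, mfun lam s|
      ≤ |Kfun lam τ| + |∫ s in τ..t, mfun lam s| := abs_add_le _ _
    _ ≤ Real.sqrt (1+t) + 4*(1+t)/(Real.log (1+t))^2 := by linarith

lemma u_abs_le {lam : ℝ → ℝ} (hl : NiceLam lam) {t : ℝ} (ht : 0 ≤ t) :
    |uAux lam t| ≤ (1+t) * (1 + lam t) := by
  rw [uAux_eq]
  have h1 : |lam t * Kfun lam t| ≤ lam t * (t/2) := by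
    rw [abs_mul, abs_of_nonneg (lam_nonneg hl t ht)]
    exact mul_le_mul_of_nonneg_left (K_abs_le hl ht) (lam_nonneg hl t ht)
  have h2 := lam_nonneg hl t ht
  calc |1 + lam t * Kfun lam t| ≤ 1 + |lam t * Kfun lam t| := by
        have := abs_add_le (1:ℝ) (lam t * Kfun lam t)
        simpa using this
    _ ≤ 1 + lam t * (t/2) := by linarith
    _ ≤ (1+t) * (1 + lam t) := by nlinarith

lemma u_hasDeriv {lam : ℝ → ℝ} (hl : NiceLam lam) {t : ℝ} (ht : 0 < t) :
    HasDerivAt (uAux lam) (deriv lam t * Kfun lam t + lam t * mfun lam t) t := by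
  rw [uAux_eq]
  exact (((hl.1 t).hasDerivAt).mul (K_hasDeriv hl ht)).const_add 1

lemma u_contOn {lam : ℝ → ℝ} (hl : NiceLam lam) : ContinuousOn (uAux lam) (Set.Ioi 0) := by
  intro s hs
  exact (u_hasDeriv hl hs).continuousAt.continuousWithinAt

def uDer (lam : ℝ → ℝ) (t : ℝ) : ℝ := deriv lam t * Kfun lam t + lam t * mfun lam t

lemma uDer_abs_small {lam : ℝ → ℝ} (hl : NiceLam lam) {t : ℝ} (ht : 0 < t) :
    |uDer lam t| ≤ t := by
  have h1 : |deriv lam t * Kfun lam t| ≤ t/2 := by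
    rw [abs_mul]
    calc |deriv lam t| * |Kfun lam t| ≤ 1 * (t/2) := by
          apply mul_le_mul _ (K_abs_le hl ht.le) (abs_nonneg _) (by norm_num)
          rw [abs_of_pos (lam_deriv_pos hl ht.le)]
          exact lam_deriv_le_one hl ht.le
      _ = t/2 := one_mul _
  have h2 : |lam t * mfun lam t| ≤ t/2 := by
    rw [abs_mul, abs_of_nonneg (lam_nonneg hl t ht.le)]
    calc lam t * |mfun lam t| ≤ lam t * (1/2) :=
          mul_le_mul_of_nonneg_left (m_abs_le_half hl ht.le) (lam_nonneg hl t ht.le)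
      _ ≤ t * (1/2) := by
          apply mul_le_mul_of_nonneg_right (lam_le_self hl t ht.le) (by norm_num)
      _ = t/2 := by ring
  calc |uDer lam t| ≤ |deriv lam t * Kfun lam t| + |lam t * mfun lam t| := abs_add_le _ _
    _ ≤ t := by linarith

lemma lam_deriv_upper {lam : ℝ → ℝ} (hl : NiceLam lam) {t : ℝ} (ht : 0 ≤ t) :
    deriv lam t ≤ (1 + 2*Real.log (1+t)) * (1+t)⁻¹ := by
  rw [lam_deriv_eq hl ht]
  have h1 := exp_neg_lam_le hl ht
  have h2 := lam_upper hl ht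
  have h3 : (0:ℝ) ≤ 1 + lam t := by linarith [lam_nonneg hl t ht]
  calc Real.exp (-lam t) * (1 + lam t) ≤ (1+t)⁻¹ * (1 + lam t) :=
        mul_le_mul_of_nonneg_right h1 h3
    _ ≤ (1+t)⁻¹ * (1 + 2*Real.log (1+t)) := by
        apply mul_le_mul_of_nonneg_left (by linarith) (by positivity)
    _ = (1 + 2*Real.log (1+t)) * (1+t)⁻¹ := mul_comm _ _

lemma uDer_abs_tail {lam : ℝ → ℝ} (hl : NiceLam lam) {t : ℝ} (ht : 8 ≤ t) :
    |uDer lam t| ≤ (1 + 2*Real.log (1+t)) * (1+t)⁻¹ *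
      (Real.sqrt (1+t) + 4*(1+t)/(Real.log (1+t))^2) + (Real.log (1+t))⁻¹ := by
  have ht0 : 0 < t := by linarith
  have hLpos : 0 < Real.log (1+t) := Real.log_pos (by linarith)
  have hlampos := lam_pos hl ht0
  have h1 : |deriv lam t * Kfun lam t| ≤ (1 + 2*Real.log (1+t)) * (1+t)⁻¹ *
      (Real.sqrt (1+t) + 4*(1+t)/(Real.log (1+t))^2) := by
    rw [abs_mul, abs_of_pos (lam_deriv_pos hl ht0.le)]
    apply mul_le_mul (lam_deriv_upper hl ht0.le) (K_split hl ht) (abs_nonneg _) (by positivity)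
  have h2 : |lam t * mfun lam t| ≤ (Real.log (1+t))⁻¹ := by
    rw [abs_mul, abs_of_nonneg hlampos.le]
    calc lam t * |mfun lam t| ≤ lam t * ((lam t)^2)⁻¹ :=
          mul_le_mul_of_nonneg_left (m_abs_le_invsq hl ht0) hlampos.le
      _ = (lam t)⁻¹ := by field_simp
      _ ≤ (Real.log (1+t))⁻¹ := by
          apply inv_anti₀ hLpos (lam_lower hl ht0.le)
  calc |uDer lam t| ≤ |deriv lam t * Kfun lam t| + |lam t * mfun lam t| := abs_add_le _ _
    _ ≤ _ := by linarith
end Chunk5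
section Chunk6
open Real MeasureTheory Filter intervalIntegral Set

def aInt (lam : ℝ → ℝ) (Δ : ℕ) (r : ℕ → ℝ) (s : ℝ) : ℝ :=
  uAux lam s * Herr lam Δ r s * lam s
def bInt (lam : ℝ → ℝ) (Δ : ℕ) (r : ℕ → ℝ) (s : ℝ) : ℝ :=
  Herr lam Δ r s * (lam s)^2

lemma alphaAux_eq (lam : ℝ → ℝ) (Δ : ℕ) (r : ℕ → ℝ) :
    alphaAux lam Δ r = fun t => -∫ s in (0:ℝ)..t, aInt lam Δ r s := rfl
lemma betaAux_eq (lam : ℝ → ℝ) (Δ : ℕ) (r : ℕ → ℝ) :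
    betaAux lam Δ r = fun t => ∫ s in (0:ℝ)..t, bInt lam Δ r s := rfl

lemma bInt_abs {lam : ℝ → ℝ} (hl : NiceLam lam) {Δ : ℕ} (hΔ : 3 ≤ Δ) {r : ℕ → ℝ}
    (hr : memR Δ r) {s : ℝ} (hs : 0 < s) :
    |bInt lam Δ r s| ≤ CH Δ * ((1+s) * Real.sqrt (1+s))⁻¹ := by
  have hlam := lam_nonneg hl s hs.le
  have key : |Herr lam Δ r s| * (1 + lam s)^2 ≤ CH Δ * ((1+s) * Real.sqrt (1+s))⁻¹ := by
    calc |Herr lam Δ r s| * (1 + lam s)^2 ≤ CH Δ * Real.exp (-(3/2) * lam s) :=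
          Herr_bound hl hΔ hr hs
      _ ≤ CH Δ * ((1+s) * Real.sqrt (1+s))⁻¹ :=
          mul_le_mul_of_nonneg_left (exp_neg_32 hl hs.le) (CH_pos hΔ).le
  calc |bInt lam Δ r s| = |Herr lam Δ r s| * (lam s)^2 := by
        unfold bInt; rw [abs_mul, abs_of_nonneg (sq_nonneg (lam s))]
    _ ≤ |Herr lam Δ r s| * (1 + lam s)^2 := by
        apply mul_le_mul_of_nonneg_left _ (abs_nonneg _)
        apply pow_le_pow_left₀ hlam (by linarith)
    _ ≤ CH Δ * ((1+s) * Real.sqrt (1+s))⁻¹ := key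

lemma aInt_abs {lam : ℝ → ℝ} (hl : NiceLam lam) {Δ : ℕ} (hΔ : 3 ≤ Δ) {r : ℕ → ℝ}
    (hr : memR Δ r) {s : ℝ} (hs : 0 < s) :
    |aInt lam Δ r s| ≤ CH Δ * (Real.sqrt (1+s))⁻¹ := by
  have hlam := lam_nonneg hl s hs.le
  have hs1 : (0:ℝ) < 1 + s := by linarith
  have hsq : 0 < Real.sqrt (1+s) := Real.sqrt_pos.mpr hs1
  have key : |Herr lam Δ r s| * (1 + lam s)^2 ≤ CH Δ * ((1+s) * Real.sqrt (1+s))⁻¹ := by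
    calc |Herr lam Δ r s| * (1 + lam s)^2 ≤ CH Δ * Real.exp (-(3/2) * lam s) :=
          Herr_bound hl hΔ hr hs
      _ ≤ CH Δ * ((1+s) * Real.sqrt (1+s))⁻¹ :=
          mul_le_mul_of_nonneg_left (exp_neg_32 hl hs.le) (CH_pos hΔ).le
  have h1 : |aInt lam Δ r s| ≤ ((1+s) * (1 + lam s)) * |Herr lam Δ r s| * lam s := by
    unfold aInt
    rw [abs_mul, abs_mul, abs_of_nonneg hlam]
    apply mul_le_mul_of_nonneg_right _ hlam
    exact mul_le_mul_of_nonneg_right (u_abs_le hl hs.le) (abs_nonneg _)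
  have h2 : ((1+s) * (1 + lam s)) * |Herr lam Δ r s| * lam s
      ≤ (1+s) * (|Herr lam Δ r s| * (1 + lam s)^2) := by
    have hrw : ((1+s) * (1 + lam s)) * |Herr lam Δ r s| * lam s
        = (1+s) * (|Herr lam Δ r s| * ((1 + lam s) * lam s)) := by ring
    rw [hrw]
    apply mul_le_mul_of_nonneg_left _ (by linarith)
    apply mul_le_mul_of_nonneg_left _ (abs_nonneg _)
    nlinarith
  have h3 : (1+s) * (CH Δ * ((1+s) * Real.sqrt (1+s))⁻¹) = CH Δ * (Real.sqrt (1+s))⁻¹ := by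
    field_simp
  calc |aInt lam Δ r s| ≤ (1+s) * (|Herr lam Δ r s| * (1 + lam s)^2) := le_trans h1 h2
    _ ≤ (1+s) * (CH Δ * ((1+s) * Real.sqrt (1+s))⁻¹) :=
        mul_le_mul_of_nonneg_left key (by linarith)
    _ = CH Δ * (Real.sqrt (1+s))⁻¹ := h3

lemma aInt_contOn {lam : ℝ → ℝ} (hl : NiceLam lam) (Δ : ℕ) (r : ℕ → ℝ) :
    ContinuousOn (aInt lam Δ r) (Set.Ioi 0) :=
  ((u_contOn hl).mul (Herr_contOn hl Δ r)).mul hl.1.continuous.continuousOn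

lemma bInt_contOn {lam : ℝ → ℝ} (hl : NiceLam lam) (Δ : ℕ) (r : ℕ → ℝ) :
    ContinuousOn (bInt lam Δ r) (Set.Ioi 0) :=
  (Herr_contOn hl Δ r).mul ((hl.1.continuous.pow 2).continuousOn)

lemma sqrt_inv_le_one {s : ℝ} (hs : 0 ≤ s) : (Real.sqrt (1+s))⁻¹ ≤ 1 := by
  have h1 : (1:ℝ) ≤ Real.sqrt (1+s) := by
    have := Real.sqrt_le_sqrt (show (1:ℝ) ≤ 1+s by linarith)
    rwa [Real.sqrt_one] at this
  exact inv_le_one_of_one_le₀ h1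

lemma pow32_inv_le_one {s : ℝ} (hs : 0 ≤ s) : ((1+s) * Real.sqrt (1+s))⁻¹ ≤ 1 := by
  have h1 : (1:ℝ) ≤ Real.sqrt (1+s) := by
    have := Real.sqrt_le_sqrt (show (1:ℝ) ≤ 1+s by linarith)
    rwa [Real.sqrt_one] at this
  have : (1:ℝ) ≤ (1+s) * Real.sqrt (1+s) := by nlinarith
  exact inv_le_one_of_one_le₀ this

lemma aInt_II {lam : ℝ → ℝ} (hl : NiceLam lam) {Δ : ℕ} (hΔ : 3 ≤ Δ) {r : ℕ → ℝ}
    (hr : memR Δ r) {t : ℝ} (ht : 0 ≤ t) :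
    IntervalIntegrable (aInt lam Δ r) MeasureTheory.volume 0 t := by
  apply II_of_bound ht ((aInt_contOn hl Δ r).mono (fun s hs => Set.mem_Ioi.mpr hs.1))
    (C := CH Δ)
  intro s hs
  calc |aInt lam Δ r s| ≤ CH Δ * (Real.sqrt (1+s))⁻¹ := aInt_abs hl hΔ hr hs.1
    _ ≤ CH Δ * 1 := mul_le_mul_of_nonneg_left (sqrt_inv_le_one hs.1.le) (CH_pos hΔ).le
    _ = CH Δ := mul_one _

lemma bInt_II {lam : ℝ → ℝ} (hl : NiceLam lam) {Δ : ℕ} (hΔ : 3 ≤ Δ) {r : ℕ → ℝ}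
    (hr : memR Δ r) {t : ℝ} (ht : 0 ≤ t) :
    IntervalIntegrable (bInt lam Δ r) MeasureTheory.volume 0 t := by
  apply II_of_bound ht ((bInt_contOn hl Δ r).mono (fun s hs => Set.mem_Ioi.mpr hs.1))
    (C := CH Δ)
  intro s hs
  calc |bInt lam Δ r s| ≤ CH Δ * ((1+s) * Real.sqrt (1+s))⁻¹ := bInt_abs hl hΔ hr hs.1
    _ ≤ CH Δ * 1 := mul_le_mul_of_nonneg_left (pow32_inv_le_one hs.1.le) (CH_pos hΔ).le
    _ = CH Δ := mul_one _

lemma alpha_hasDeriv {lam : ℝ → ℝ} (hl : NiceLam lam) {Δ : ℕ} (hΔ : 3 ≤ Δ) {r : ℕ → ℝ}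
    (hr : memR Δ r) {t : ℝ} (ht : 0 < t) :
    HasDerivAt (alphaAux lam Δ r) (-aInt lam Δ r t) t := by
  rw [alphaAux_eq]
  apply HasDerivAt.neg
  apply intervalIntegral.integral_hasDerivAt_right (aInt_II hl hΔ hr ht.le)
  · exact (aInt_contOn hl Δ r).stronglyMeasurableAtFilter isOpen_Ioi _ (Set.mem_Ioi.mpr ht)
  · exact (aInt_contOn hl Δ r).continuousAt (isOpen_Ioi.mem_nhds (Set.mem_Ioi.mpr ht))

lemma beta_hasDeriv {lam : ℝ → ℝ} (hl : NiceLam lam) {Δ : ℕ} (hΔ : 3 ≤ Δ) {r : ℕ → ℝ}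
    (hr : memR Δ r) {t : ℝ} (ht : 0 < t) :
    HasDerivAt (betaAux lam Δ r) (bInt lam Δ r t) t := by
  rw [betaAux_eq]
  apply intervalIntegral.integral_hasDerivAt_right (bInt_II hl hΔ hr ht.le)
  · exact (bInt_contOn hl Δ r).stronglyMeasurableAtFilter isOpen_Ioi _ (Set.mem_Ioi.mpr ht)
  · exact (bInt_contOn hl Δ r).continuousAt (isOpen_Ioi.mem_nhds (Set.mem_Ioi.mpr ht))

lemma alpha_abs {lam : ℝ → ℝ} (hl : NiceLam lam) {Δ : ℕ} (hΔ : 3 ≤ Δ) {r : ℕ → ℝ}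
    (hr : memR Δ r) {t : ℝ} (ht : 0 ≤ t) :
    |alphaAux lam Δ r t| ≤ 2 * CH Δ * Real.sqrt (1+t) := by
  rw [alphaAux_eq]
  simp only [abs_neg]
  have hbd := intervalIntegral.norm_integral_le_abs_of_norm_le
    (f := aInt lam Δ r) (g := fun s => CH Δ * (Real.sqrt (1+s))⁻¹) (μ := MeasureTheory.volume)
    (a := 0) (b := t) ?_ ?_
  · rw [Real.norm_eq_abs] at hbd
    have heval : ∫ s in (0:ℝ)..t, CH Δ * (Real.sqrt (1+s))⁻¹
        = CH Δ * (2*Real.sqrt (1+t) - 2) := by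
      rw [intervalIntegral.integral_const_mul, integral_inv_sqrt ht]
    rw [heval] at hbd
    have h2 : (1:ℝ) ≤ Real.sqrt (1+t) := by
      have := Real.sqrt_le_sqrt (show (1:ℝ) ≤ 1+t by linarith)
      rwa [Real.sqrt_one] at this
    have h3 : |CH Δ * (2*Real.sqrt (1+t) - 2)| = CH Δ * (2*Real.sqrt (1+t) - 2) := by
      apply abs_of_nonneg
      apply mul_nonneg (CH_pos hΔ).le
      linarith
    rw [h3] at hbd
    calc |∫ s in (0:ℝ)..t, aInt lam Δ r s| ≤ CH Δ * (2*Real.sqrt (1+t) - 2) := hbd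
      _ ≤ 2 * CH Δ * Real.sqrt (1+t) := by nlinarith [(CH_pos hΔ).le]
  · rw [MeasureTheory.ae_restrict_iff' measurableSet_uIoc]
    apply MeasureTheory.ae_of_all
    intro s hs
    rw [Set.uIoc_of_le ht] at hs
    rw [Real.norm_eq_abs]
    exact aInt_abs hl hΔ hr hs.1
  · apply II_of_bound ht (C := CH Δ)
    · apply ContinuousOn.mul continuousOn_const
      apply ContinuousOn.inv₀
      · exact (Real.continuous_sqrt.comp (continuous_const.add continuous_id)).continuousOn
      · intro s hs
        have : (0:ℝ) < 1 + s := by have := hs.1; linarith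
        exact (Real.sqrt_pos.mpr this).ne'
    · intro s hs
      show |CH Δ * (Real.sqrt (1+s))⁻¹| ≤ CH Δ
      rw [abs_of_nonneg (mul_nonneg (CH_pos hΔ).le (by positivity))]
      calc CH Δ * (Real.sqrt (1+s))⁻¹ ≤ CH Δ * 1 :=
            mul_le_mul_of_nonneg_left (sqrt_inv_le_one hs.1.le) (CH_pos hΔ).le
        _ = CH Δ := mul_one _

lemma beta_abs {lam : ℝ → ℝ} (hl : NiceLam lam) {Δ : ℕ} (hΔ : 3 ≤ Δ) {r : ℕ → ℝ}
    (hr : memR Δ r) {t : ℝ} (ht : 0 ≤ t) :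
    |betaAux lam Δ r t| ≤ 2 * CH Δ := by
  rw [betaAux_eq]
  have hbd := intervalIntegral.norm_integral_le_abs_of_norm_le
    (f := bInt lam Δ r) (g := fun s => CH Δ * ((1+s) * Real.sqrt (1+s))⁻¹)
    (μ := MeasureTheory.volume) (a := 0) (b := t) ?_ ?_
  · rw [Real.norm_eq_abs] at hbd
    have heval : ∫ s in (0:ℝ)..t, CH Δ * ((1+s) * Real.sqrt (1+s))⁻¹
        = CH Δ * (2 - 2*(Real.sqrt (1+t))⁻¹) := by
      rw [intervalIntegral.integral_const_mul, integral_inv_pow32 ht]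
    rw [heval] at hbd
    have h2 : (Real.sqrt (1+t))⁻¹ ≤ 1 := sqrt_inv_le_one ht
    have h2b : 0 ≤ (Real.sqrt (1+t))⁻¹ := by positivity
    have h3 : |CH Δ * (2 - 2*(Real.sqrt (1+t))⁻¹)| = CH Δ * (2 - 2*(Real.sqrt (1+t))⁻¹) := by
      apply abs_of_nonneg
      apply mul_nonneg (CH_pos hΔ).le
      linarith
    rw [h3] at hbd
    calc |∫ s in (0:ℝ)..t, bInt lam Δ r s| ≤ CH Δ * (2 - 2*(Real.sqrt (1+t))⁻¹) := hbd
      _ ≤ 2 * CH Δ := by nlinarith [(CH_pos hΔ).le]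
  · rw [MeasureTheory.ae_restrict_iff' measurableSet_uIoc]
    apply MeasureTheory.ae_of_all
    intro s hs
    rw [Set.uIoc_of_le ht] at hs
    rw [Real.norm_eq_abs]
    exact bInt_abs hl hΔ hr hs.1
  · apply II_of_bound ht (C := CH Δ)
    · apply ContinuousOn.mul continuousOn_const
      apply ContinuousOn.inv₀
      · apply ContinuousOn.mul (continuous_const.add continuous_id).continuousOn
        exact (Real.continuous_sqrt.comp (continuous_const.add continuous_id)).continuousOn
      · intro s hs
        have h5 : (0:ℝ) < 1 + s := by have := hs.1; linarith
        have := Real.sqrt_pos.mpr h5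
        positivity
    · intro s hs
      show |CH Δ * ((1+s) * Real.sqrt (1+s))⁻¹| ≤ CH Δ
      rw [abs_of_nonneg (mul_nonneg (CH_pos hΔ).le (inv_nonneg.mpr
        (mul_nonneg (by linarith [hs.1] : (0:ℝ) ≤ 1+s) (Real.sqrt_nonneg _))))]
      calc CH Δ * ((1+s) * Real.sqrt (1+s))⁻¹ ≤ CH Δ * 1 :=
            mul_le_mul_of_nonneg_left (pow32_inv_le_one hs.1.le) (CH_pos hΔ).le
        _ = CH Δ := mul_one _

/-- derivative of `ω`: the inhomogeneous terms cancel. -/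
lemma omega_hasDeriv {lam : ℝ → ℝ} (hl : NiceLam lam) {Δ : ℕ} (hΔ : 3 ≤ Δ) {r : ℕ → ℝ}
    (hr : memR Δ r) {t : ℝ} (ht : 0 < t) :
    HasDerivAt (omegaAux lam Δ r)
      (alphaAux lam Δ r t * deriv lam t + betaAux lam Δ r t * uDer lam t) t := by
  have h1 := (alpha_hasDeriv hl hΔ hr ht).mul (hl.1 t).hasDerivAt
  have h2 := (beta_hasDeriv hl hΔ hr ht).mul (u_hasDeriv hl ht)
  have h3 := h1.add h2
  have heq : omegaAux lam Δ r = fun t =>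
      alphaAux lam Δ r t * lam t + betaAux lam Δ r t * uAux lam t := rfl
  rw [heq]
  refine h3.congr_deriv ?_
  unfold aInt bInt uDer
  ring
end Chunk6
section Chunk7
open Real MeasureTheory Filter intervalIntegral Set

def omegaDer (lam : ℝ → ℝ) (Δ : ℕ) (r : ℕ → ℝ) (t : ℝ) : ℝ :=
  alphaAux lam Δ r t * deriv lam t + betaAux lam Δ r t * uDer lam t

lemma omegaDer_abs_le {lam : ℝ → ℝ} (hl : NiceLam lam) {Δ : ℕ} (hΔ : 3 ≤ Δ) {r : ℕ → ℝ}
    (hr : memR Δ r) {t : ℝ} (ht : 0 < t) :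
    |omegaDer lam Δ r t| ≤
      (2 * CH Δ * Real.sqrt (1+t)) * |deriv lam t| + (2 * CH Δ) * |uDer lam t| := by
  have h1 : |alphaAux lam Δ r t * deriv lam t| ≤ (2 * CH Δ * Real.sqrt (1+t)) * |deriv lam t| := by
    rw [abs_mul]
    exact mul_le_mul_of_nonneg_right (alpha_abs hl hΔ hr ht.le) (abs_nonneg _)
  have h2 : |betaAux lam Δ r t * uDer lam t| ≤ (2 * CH Δ) * |uDer lam t| := by
    rw [abs_mul]
    exact mul_le_mul_of_nonneg_right (beta_abs hl hΔ hr ht.le) (abs_nonneg _)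
  calc |omegaDer lam Δ r t| ≤ |alphaAux lam Δ r t * deriv lam t|
      + |betaAux lam Δ r t * uDer lam t| := abs_add_le _ _
    _ ≤ _ := by linarith

lemma omegaDer_small {lam : ℝ → ℝ} (hl : NiceLam lam) {Δ : ℕ} (hΔ : 3 ≤ Δ) {r : ℕ → ℝ}
    (hr : memR Δ r) {t T₀ : ℝ} (ht : 0 < t) (htT : t ≤ T₀) :
    |omegaDer lam Δ r t| ≤ 2 * CH Δ * Real.sqrt (1+T₀) + 2 * CH Δ * T₀ := by
  have hT0 : 0 ≤ T₀ := le_trans ht.le htT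
  have hd1 : |deriv lam t| ≤ 1 := by
    rw [abs_of_pos (lam_deriv_pos hl ht.le)]
    exact lam_deriv_le_one hl ht.le
  have hd2 : |uDer lam t| ≤ T₀ := le_trans (uDer_abs_small hl ht) htT
  have hsq : Real.sqrt (1+t) ≤ Real.sqrt (1+T₀) := Real.sqrt_le_sqrt (by linarith)
  have h := omegaDer_abs_le hl hΔ hr ht
  have hCH := (CH_pos hΔ).le
  have e1 : (2 * CH Δ * Real.sqrt (1+t)) * |deriv lam t| ≤ 2 * CH Δ * Real.sqrt (1+T₀) := by
    calc (2 * CH Δ * Real.sqrt (1+t)) * |deriv lam t| ≤ (2 * CH Δ * Real.sqrt (1+T₀)) * 1 := by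
          apply mul_le_mul _ hd1 (abs_nonneg _) (by positivity)
          apply mul_le_mul_of_nonneg_left hsq (by positivity)
      _ = 2 * CH Δ * Real.sqrt (1+T₀) := mul_one _
  have e2 : (2 * CH Δ) * |uDer lam t| ≤ 2 * CH Δ * T₀ :=
    mul_le_mul_of_nonneg_left hd2 (by positivity)
  linarith

lemma log_nine_ge_two : (2:ℝ) ≤ Real.log 9 := by
  have h : Real.exp 2 ≤ 9 := by
    have h1 := Real.exp_one_lt_d9
    have h2 : Real.exp 2 = Real.exp 1 * Real.exp 1 := by rw [← Real.exp_add]; norm_num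
    nlinarith [Real.exp_pos 1]
  calc (2:ℝ) = Real.log (Real.exp 2) := (Real.log_exp 2).symm
    _ ≤ Real.log 9 := Real.log_le_log (Real.exp_pos 2) h

lemma omegaDer_tail {lam : ℝ → ℝ} (hl : NiceLam lam) {Δ : ℕ} (hΔ : 3 ≤ Δ) {r : ℕ → ℝ}
    (hr : memR Δ r) {t : ℝ} (ht : 8 ≤ t) :
    |omegaDer lam Δ r t| ≤ CH Δ *
      (36 * (Real.sqrt (Real.sqrt (1+t)))⁻¹ + 26 * (Real.log (1+t))⁻¹) := by
  have ht0 : (0:ℝ) < t := by linarith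
  have h1t : (0:ℝ) < 1 + t := by linarith
  set L := Real.log (1+t) with hLdef
  set S := Real.sqrt (1+t) with hSdef
  set q := Real.sqrt S with hqdef
  have hS2 : S^2 = 1+t := Real.sq_sqrt h1t.le
  have hS3 : (3:ℝ) ≤ S := by
    rw [hSdef, show (3:ℝ) = Real.sqrt 9 by
      rw [show (9:ℝ) = 3^2 by norm_num, Real.sqrt_sq (by norm_num)]]
    exact Real.sqrt_le_sqrt (by linarith)
  have hSpos : (0:ℝ) < S := by linarith
  have hq2 : q^2 = S := Real.sq_sqrt hSpos.le
  have hq1 : (1:ℝ) ≤ q := by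
    rw [hqdef]
    have := Real.sqrt_le_sqrt (show (1:ℝ) ≤ S by linarith)
    rwa [Real.sqrt_one] at this
  have hqpos : (0:ℝ) < q := by linarith
  have hL2 : (2:ℝ) ≤ L := by
    rw [hLdef]
    calc (2:ℝ) ≤ Real.log 9 := log_nine_ge_two
      _ ≤ Real.log (1+t) := Real.log_le_log (by norm_num) (by linarith)
  have hLpos : (0:ℝ) < L := by linarith
  -- L ≤ 4q
  have hLq : L ≤ 4*q := by
    have hlogS : Real.log S = L/2 := by rw [hSdef, hLdef, Real.log_sqrt h1t.le]
    have hlogq : Real.log q = L/4 := by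
      rw [hqdef, Real.log_sqrt hSpos.le, hlogS]; ring
    have := Real.log_le_sub_one_of_pos hqpos
    rw [hlogq] at this
    linarith
  -- component bounds
  have hαd : (2 * CH Δ * S) * |deriv lam t| ≤ 2 * CH Δ * ((1+2*L) * (1+t)⁻¹ * S) := by
    rw [abs_of_pos (lam_deriv_pos hl ht0.le)]
    have := lam_deriv_upper hl ht0.le
    rw [← hLdef] at this
    calc (2 * CH Δ * S) * deriv lam t ≤ (2 * CH Δ * S) * ((1+2*L) * (1+t)⁻¹) := by
          apply mul_le_mul_of_nonneg_left this
            (mul_nonneg (mul_nonneg (by norm_num) (CH_pos hΔ).le) hSpos.le)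
      _ = 2 * CH Δ * ((1+2*L) * (1+t)⁻¹ * S) := by ring
  have hβd : (2 * CH Δ) * |uDer lam t| ≤
      2 * CH Δ * ((1+2*L) * (1+t)⁻¹ * (S + 4*(1+t)/L^2) + L⁻¹) := by
    have := uDer_abs_tail hl ht
    rw [← hLdef, ← hSdef] at this
    exact mul_le_mul_of_nonneg_left this (mul_nonneg (by norm_num) (CH_pos hΔ).le)
  have harith : 2*((1+2*L) * (1+t)⁻¹ * S) + 2*((1+2*L) * (1+t)⁻¹ * (S + 4*(1+t)/L^2) + L⁻¹)
      ≤ 36 * q⁻¹ + 26 * L⁻¹ := by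
    have hLHS : 2*((1+2*L) * (1+t)⁻¹ * S) + 2*((1+2*L) * (1+t)⁻¹ * (S + 4*(1+t)/L^2) + L⁻¹)
        = 4*((1+2*L) * S⁻¹) + 8*(1+2*L)/L^2 + 2*L⁻¹ := by
      rw [← hS2]
      field_simp
      ring
    have k3 : (1+2*L) * S⁻¹ ≤ 9 * q⁻¹ := by
      have h9 : 1+2*L ≤ 9*q := by linarith
      calc (1+2*L) * S⁻¹ ≤ (9*q) * S⁻¹ :=
            mul_le_mul_of_nonneg_right h9 (inv_nonneg.mpr hSpos.le)
        _ = 9 * q⁻¹ := by rw [← hq2]; field_simp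
    have k5 : 8*(1+2*L)/L^2 ≤ 24 * L⁻¹ := by
      rw [div_le_iff₀ (by positivity : (0:ℝ) < L^2)]
      have he : 24 * L⁻¹ * L^2 = 24 * L := by field_simp
      rw [he]
      linarith
    rw [hLHS]
    linarith
  have hfinal : 2 * CH Δ * ((1+2*L) * (1+t)⁻¹ * S)
      + 2 * CH Δ * ((1+2*L) * (1+t)⁻¹ * (S + 4*(1+t)/L^2) + L⁻¹)
      ≤ CH Δ * (36 * q⁻¹ + 26 * L⁻¹) := by
    have heq : 2 * CH Δ * ((1+2*L) * (1+t)⁻¹ * S)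
        + 2 * CH Δ * ((1+2*L) * (1+t)⁻¹ * (S + 4*(1+t)/L^2) + L⁻¹)
        = CH Δ * (2*((1+2*L) * (1+t)⁻¹ * S)
          + 2*((1+2*L) * (1+t)⁻¹ * (S + 4*(1+t)/L^2) + L⁻¹)) := by ring
    rw [heq]
    exact mul_le_mul_of_nonneg_left harith (CH_pos hΔ).le
  have hstart := omegaDer_abs_le hl hΔ hr ht0
  rw [← hSdef] at hstart
  calc |omegaDer lam Δ r t| ≤ (2 * CH Δ * S) * |deriv lam t| + (2 * CH Δ) * |uDer lam t| := hstart
    _ ≤ 2 * CH Δ * ((1+2*L) * (1+t)⁻¹ * S)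
        + 2 * CH Δ * ((1+2*L) * (1+t)⁻¹ * (S + 4*(1+t)/L^2) + L⁻¹) := by linarith
    _ ≤ CH Δ * (36 * q⁻¹ + 26 * L⁻¹) := hfinal
end Chunk7
section Chunk8
open Real MeasureTheory Filter intervalIntegral Set

lemma bound_small {v : ℝ} (hv : 0 < v) : ∃ T₀ : ℝ, 8 ≤ T₀ ∧ ∀ t, T₀ ≤ t →
    36 * (Real.sqrt (Real.sqrt (1+t)))⁻¹ + 26 * (Real.log (1+t))⁻¹ ≤ v := by
  refine ⟨max 8 (max ((72/v)^4) (Real.exp (52/v))), le_max_left _ _, ?_⟩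
  intro t ht
  have h72 : (0:ℝ) < 72/v := by positivity
  have h52 : (0:ℝ) < 52/v := by positivity
  have ht8 : (8:ℝ) ≤ t := le_trans (le_max_left _ _) ht
  have h1 : (72/v)^4 ≤ 1 + t := by
    have := le_trans (le_trans (le_max_left _ _) (le_max_right 8 _)) ht
    linarith
  have h2 : Real.exp (52/v) ≤ 1 + t := by
    have := le_trans (le_trans (le_max_right _ _) (le_max_right 8 _)) ht
    linarith
  have hq : 72/v ≤ Real.sqrt (Real.sqrt (1+t)) := by
    have ha : Real.sqrt ((72/v)^4) = (72/v)^2 := by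
      rw [show ((72/v):ℝ)^4 = ((72/v)^2)^2 by ring, Real.sqrt_sq (by positivity)]
    have hb : Real.sqrt ((72/v)^2) = 72/v := Real.sqrt_sq h72.le
    calc 72/v = Real.sqrt (Real.sqrt ((72/v)^4)) := by rw [ha, hb]
      _ ≤ Real.sqrt (Real.sqrt (1+t)) :=
          Real.sqrt_le_sqrt (Real.sqrt_le_sqrt h1)
  have hL : 52/v ≤ Real.log (1+t) := by
    calc 52/v = Real.log (Real.exp (52/v)) := (Real.log_exp _).symm
      _ ≤ Real.log (1+t) := Real.log_le_log (Real.exp_pos _) h2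
  have hqpos : (0:ℝ) < Real.sqrt (Real.sqrt (1+t)) := lt_of_lt_of_le h72 hq
  have hLpos : (0:ℝ) < Real.log (1+t) := lt_of_lt_of_le h52 hL
  have e1 : 36 * (Real.sqrt (Real.sqrt (1+t)))⁻¹ ≤ v/2 := by
    have := inv_anti₀ h72 hq
    calc 36 * (Real.sqrt (Real.sqrt (1+t)))⁻¹ ≤ 36 * (72/v)⁻¹ := by
          apply mul_le_mul_of_nonneg_left this (by norm_num)
      _ = v/2 := by field_simp; ring
  have e2 : 26 * (Real.log (1+t))⁻¹ ≤ v/2 := by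
    have := inv_anti₀ h52 hL
    calc 26 * (Real.log (1+t))⁻¹ ≤ 26 * (52/v)⁻¹ := by
          apply mul_le_mul_of_nonneg_left this (by norm_num)
      _ = v/2 := by field_simp; ring
  linarith

lemma omega_contOn {lam : ℝ → ℝ} (hl : NiceLam lam) {Δ : ℕ} (hΔ : 3 ≤ Δ) {r : ℕ → ℝ}
    (hr : memR Δ r) {T : ℝ} (hT : 0 ≤ T) :
    ContinuousOn (omegaAux lam Δ r) (Set.Icc 0 T) := by
  have hIcc : Set.uIcc (0:ℝ) T = Set.Icc 0 T := Set.uIcc_of_le hT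
  have hα : ContinuousOn (alphaAux lam Δ r) (Set.Icc 0 T) := by
    rw [alphaAux_eq, ← hIcc]
    exact (intervalIntegral.continuousOn_primitive_interval'
      (aInt_II hl hΔ hr hT) Set.left_mem_uIcc).neg
  have hβ : ContinuousOn (betaAux lam Δ r) (Set.Icc 0 T) := by
    rw [betaAux_eq, ← hIcc]
    exact intervalIntegral.continuousOn_primitive_interval'
      (bInt_II hl hΔ hr hT) Set.left_mem_uIcc
  have hK : ContinuousOn (Kfun lam) (Set.Icc 0 T) := by
    unfold Kfun
    rw [← hIcc]
    exact intervalIntegral.continuousOn_primitive_interval'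
      (m_II hl (le_refl 0) hT) Set.left_mem_uIcc
  have hu : ContinuousOn (uAux lam) (Set.Icc 0 T) := by
    rw [uAux_eq]
    exact (continuousOn_const.add (hl.1.continuous.continuousOn.mul hK))
  have : omegaAux lam Δ r = fun t =>
      alphaAux lam Δ r t * lam t + betaAux lam Δ r t * uAux lam t := rfl
  rw [this]
  exact (hα.mul hl.1.continuous.continuousOn).add (hβ.mul hu)

lemma Upsilon_ge_three {Δ : ℕ} (hΔ : 3 ≤ Δ) {r : ℕ → ℝ} (hr : memR Δ r) :
    3 ≤ Upsilon Δ r := by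
  unfold Upsilon
  have h1 : ∑ k ∈ Finset.Icc 3 Δ, 3 * r k ≤ ∑ k ∈ Finset.Icc 3 Δ, (k:ℝ) * ((k:ℝ) - 2) * r k := by
    apply Finset.sum_le_sum
    intro k hk
    obtain ⟨hk3, hkΔ⟩ := Finset.mem_Icc.1 hk
    have hrk := hr.2.1 k hk3 hkΔ
    have hk3' : (3:ℝ) ≤ (k:ℝ) := by exact_mod_cast hk3
    apply mul_le_mul_of_nonneg_right _ hrk
    nlinarith
  rw [← Finset.mul_sum, hr.2.2.2, mul_one] at h1
  exact h1

/-- generic piecewise monotonicity -/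
lemma piecewise_mono {lam : ℝ → ℝ} (hl : NiceLam lam) {Δ : ℕ} (hΔ : 3 ≤ Δ) :
    ∃ ε₀ : ℝ, 0 < ε₀ ∧ ε₀ ≤ 1 ∧ ∀ ε : ℝ, 0 < ε → ε < ε₀ → ∀ r : ℕ → ℝ, memR Δ r →
      ∀ c T : ℝ, 0 ≤ c → c ≤ (3/2)*ε → 0 < T → T ≤ 2/(3*ε) →
      MonotoneOn (fun t => if t ≤ T then lam t + c * omegaAux lam Δ r t
        else lam T + c * omegaAux lam Δ r T) (Set.Ici 0) := by
  have hCH := CH_pos hΔ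
  obtain ⟨T₀, hT₀8, hT₀⟩ := bound_small (v := (2/5) / CH Δ) (by positivity)
  set M₀ : ℝ := 2 * CH Δ * Real.sqrt (1+T₀) + 2 * CH Δ * T₀ with hM₀def
  have hM₀ : 0 ≤ M₀ := by
    rw [hM₀def]
    have : (0:ℝ) ≤ Real.sqrt (1+T₀) := Real.sqrt_nonneg _
    nlinarith
  have hT₀pos : (0:ℝ) < 1 + T₀ := by linarith
  set ε₀ : ℝ := min 1 ((1+T₀)⁻¹ / ((3/2)*(M₀+1))) with hε₀def
  have hε₀pos : 0 < ε₀ := by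
    apply lt_min (by norm_num)
    positivity
  refine ⟨ε₀, hε₀pos, min_le_left _ _, ?_⟩
  intro ε hε hεε₀ r hr c T hc0 hc hT0 hT
  have hε1 : ε ≤ 1 := le_of_lt (lt_of_lt_of_le hεε₀ (min_le_left _ _))
  -- key derivative positivity on (0, T)
  have hderiv_nonneg : ∀ t, t ∈ Set.Ioo 0 T → 0 ≤ deriv lam t + c * omegaDer lam Δ r t := by
    intro t ⟨ht0, htT⟩
    have hlow := lam_deriv_lower hl ht0.le
    have habs : c * |omegaDer lam Δ r t| ≤ (1+t)⁻¹ := by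
      rcases le_or_gt t T₀ with hcase | hcase
      · -- small time
        have hω := omegaDer_small hl hΔ hr ht0 hcase
        have h1 : c * |omegaDer lam Δ r t| ≤ ((3/2)*ε) * M₀ := by
          apply mul_le_mul hc (by rw [← hM₀def] at hω; exact hω) (abs_nonneg _) (by positivity)
        have h2 : ((3/2)*ε) * M₀ ≤ (3/2) * ε₀ * (M₀+1) := by nlinarith
        have h3 : (3/2) * ε₀ * (M₀+1) ≤ (1+T₀)⁻¹ := by
          have hε₀le : ε₀ ≤ (1+T₀)⁻¹ / ((3/2)*(M₀+1)) := min_le_right _ _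
          rw [div_eq_mul_inv] at hε₀le
          have hpos : (0:ℝ) < (3/2)*(M₀+1) := by nlinarith
          calc (3/2) * ε₀ * (M₀+1) ≤ (3/2) * ((1+T₀)⁻¹ * ((3/2)*(M₀+1))⁻¹) * (M₀+1) := by
                apply mul_le_mul_of_nonneg_right _ (by linarith)
                exact mul_le_mul_of_nonneg_left hε₀le (by norm_num)
            _ = (1+T₀)⁻¹ * (((3/2)*(M₀+1)) * ((3/2)*(M₀+1))⁻¹) := by ring
            _ = (1+T₀)⁻¹ := by rw [mul_inv_cancel₀ hpos.ne', mul_one]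
        have h4 : (1+T₀)⁻¹ ≤ (1+t)⁻¹ := by
          apply inv_anti₀ (by linarith) (by linarith)
        linarith
      · -- tail
        have hω := omegaDer_tail hl hΔ hr (le_trans hT₀8 hcase.le)
        have hωv : |omegaDer lam Δ r t| ≤ 2/5 := by
          calc |omegaDer lam Δ r t| ≤ CH Δ *
              (36 * (Real.sqrt (Real.sqrt (1+t)))⁻¹ + 26 * (Real.log (1+t))⁻¹) := hω
            _ ≤ CH Δ * ((2/5) / CH Δ) :=
                mul_le_mul_of_nonneg_left (hT₀ t hcase.le) hCH.le
            _ = 2/5 := by field_simp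
        have h1 : c * |omegaDer lam Δ r t| ≤ (3/2)*ε * (2/5) := by
          apply mul_le_mul hc hωv (abs_nonneg _) (by positivity)
        have h2 : (1 + 2/(3*ε))⁻¹ ≤ (1+t)⁻¹ := by
          apply inv_anti₀ (by linarith) (by linarith [le_trans hT (by norm_num : 2/(3*ε) ≤ 2/(3*ε))])
        have h3 : (3/5)*ε ≤ (1 + 2/(3*ε))⁻¹ := by
          rw [show (1 + 2/(3*ε)) = (3*ε + 2)/(3*ε) by field_simp]
          rw [inv_div]
          rw [le_div_iff₀ (by linarith)]
          nlinarith
        have h4 : (3/2)*ε*(2/5) = (3/5)*ε*(1/2) + (3/10)*ε := by ring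
        nlinarith
    have : c * omegaDer lam Δ r t ≥ -(1+t)⁻¹ := by
      have := neg_abs_le (c * omegaDer lam Δ r t)
      have habs2 : |c * omegaDer lam Δ r t| ≤ (1+t)⁻¹ := by
        rw [abs_mul, abs_of_nonneg hc0]; exact habs
      linarith [neg_le_neg habs2, (abs_le.1 habs2).1]
    linarith
  -- inner monotonicity on [0, T]
  have hmono : MonotoneOn (fun t => lam t + c * omegaAux lam Δ r t) (Set.Icc 0 T) := by
    apply mono_from_deriv_Icc (F' := fun t => deriv lam t + c * omegaDer lam Δ r t)
    · apply ContinuousOn.add hl.1.continuous.continuousOn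
      exact (omega_contOn hl hΔ hr hT0.le).const_smul c
    · intro t ht
      have h1 := (hl.1 t).hasDerivAt
      have h2 := (omega_hasDeriv hl hΔ hr ht.1).const_mul c
      exact h1.add h2
    · exact hderiv_nonneg
  -- piecewise conclusion
  intro a ha b hb hab
  simp only [Set.mem_Ici] at ha hb
  by_cases hbT : b ≤ T
  · have haT : a ≤ T := le_trans hab hbT
    simp only [if_pos haT, if_pos hbT]
    exact hmono ⟨ha, haT⟩ ⟨hb, hbT⟩ hab
  · push_neg at hbT
    by_cases haT : a ≤ T
    · simp only [if_pos haT, if_neg (not_le.mpr hbT)]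
      exact hmono ⟨ha, haT⟩ ⟨hT0.le, le_refl T⟩ haT
    · simp only [if_neg haT, if_neg (not_le.mpr hbT)]
      exact le_refl _
end Chunk8

/-- Properties of the approximations of the eigenfunction: `w^-_{p,δ}(0) = w^+_{p,δ}(0) = 0`,
and for small `ε` both are monotone increasing on `[0,∞)`. -/
theorem w_approx_properties (Δ : ℕ) (hΔ : 3 ≤ Δ) (lam : ℝ → ℝ)
    (hdiff : Differentiable ℝ lam) (h0 : lam 0 = 0)
    (hode : ∀ t : ℝ, 0 ≤ t → deriv lam t = Real.exp (-lam t) * (1 + lam t))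
    (δ : ℝ) (hδ0 : 0 < δ) (hδ1 : δ < 1) :
    (∀ ε : ℝ, 0 < ε → ε ≤ 1 → ∀ r : ℕ → ℝ, memR Δ r →
      wMinus lam Δ r ε δ 0 = 0 ∧ wPlus lam Δ r ε δ 0 = 0) ∧
    (∃ ε₀ : ℝ, 0 < ε₀ ∧ ∀ ε : ℝ, 0 < ε → ε < ε₀ → ∀ r : ℕ → ℝ, memR Δ r →
      MonotoneOn (wMinus lam Δ r ε δ) (Set.Ici 0) ∧
      MonotoneOn (wPlus lam Δ r ε δ) (Set.Ici 0)) := by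
  have hl : NiceLam lam := ⟨hdiff, h0, hode⟩
  constructor
  · -- part (a)
    intro ε hε0 hε1 r hr
    have hΥ := Upsilon_ge_three hΔ hr
    have hΥpos : 0 < Upsilon Δ r := by linarith
    have hω0 : omegaAux lam Δ r 0 = 0 := by
      have hα0 : alphaAux lam Δ r 0 = 0 := by
        show -(∫ s in (0:ℝ)..0, aInt lam Δ r s) = 0
        rw [intervalIntegral.integral_same]; ring
      have hβ0 : betaAux lam Δ r 0 = 0 := by
        show (∫ s in (0:ℝ)..0, bInt lam Δ r s) = 0
        exact intervalIntegral.integral_same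
      show alphaAux lam Δ r 0 * lam 0 + betaAux lam Δ r 0 * uAux lam 0 = 0
      rw [hα0, hβ0]; ring
    constructor
    · show (if (0:ℝ) ≤ tMinus Δ r ε δ then lam 0 + (1 + δ/2) * ε * omegaAux lam Δ r 0
        else lam (tMinus Δ r ε δ) + (1 + δ/2) * ε * omegaAux lam Δ r (tMinus Δ r ε δ)) = 0
      have htM : (0:ℝ) ≤ tMinus Δ r ε δ := by
        unfold tMinus
        apply div_nonneg (by linarith) (by positivity)
      rw [if_pos htM, h0, hω0]; ring
    · show (if (0:ℝ) ≤ tPlus Δ r ε δ then lam 0 + (1 - δ/2) * ε * omegaAux lam Δ r 0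
        else lam (tPlus Δ r ε δ) + (1 - δ/2) * ε * omegaAux lam Δ r (tPlus Δ r ε δ)) = 0
      have htP : (0:ℝ) ≤ tPlus Δ r ε δ := by
        unfold tPlus
        apply div_nonneg (by linarith) (by positivity)
      rw [if_pos htP, h0, hω0]; ring
  · -- part (b)
    obtain ⟨ε₀, hε₀pos, hε₀le1, hmain⟩ := piecewise_mono hl hΔ
    refine ⟨ε₀, hε₀pos, ?_⟩
    intro ε hε hεε₀ r hr
    have hΥ := Upsilon_ge_three hΔ hr
    have hΥpos : 0 < Upsilon Δ r := by linarith
    constructor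
    · have hfeq : wMinus lam Δ r ε δ = fun t =>
        if t ≤ tMinus Δ r ε δ then lam t + ((1 + δ/2) * ε) * omegaAux lam Δ r t
        else lam (tMinus Δ r ε δ) + ((1 + δ/2) * ε) * omegaAux lam Δ r (tMinus Δ r ε δ) := by
        funext t
        unfold wMinus
        rw [mul_assoc, mul_assoc]
      rw [hfeq]
      apply hmain ε hε hεε₀ r hr
      · positivity
      · nlinarith
      · show 0 < (1-δ)/(ε * Upsilon Δ r)
        exact div_pos (by linarith) (by positivity)
      · show (1-δ)/(ε * Upsilon Δ r) ≤ 2/(3*ε)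
        rw [div_le_div_iff₀ (by positivity) (by positivity)]
        nlinarith
    · have hfeq : wPlus lam Δ r ε δ = fun t =>
        if t ≤ tPlus Δ r ε δ then lam t + ((1 - δ/2) * ε) * omegaAux lam Δ r t
        else lam (tPlus Δ r ε δ) + ((1 - δ/2) * ε) * omegaAux lam Δ r (tPlus Δ r ε δ) := by
        funext t
        unfold wPlus
        rw [mul_assoc, mul_assoc]
      rw [hfeq]
      apply hmain ε hε hεε₀ r hr
      · nlinarith
      · nlinarith
      · show 0 < (1+δ)/(ε * Upsilon Δ r)
        exact div_pos (by linarith) (by positivity)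
      · show (1+δ)/(ε * Upsilon Δ r) ≤ 2/(3*ε)
        rw [div_le_div_iff₀ (by positivity) (by positivity)]
        nlinarith
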